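/- arXiv:math/0701375 — 5 statements merged into one kernel-verified Lean document; each statement's English description precedes it below -/
import Mathlib

section
/- Let p be a prime with p ≠ 3, let q = p^r, let m ≥ 1, let a, b ∈ 𝔽_q with a ≠ b, and let β ∈ 𝔽_{q^m}. Then the number of triples (x, y, z) ∈ 𝔽_{q^m}³ satisfying y^q − y = x + a(β + x³) and z^q − z = x + b(β + x³) equals q^m + Σ_{v ∈ 𝔽_q^*} e(vβ) · Σ_{u ∈ 𝔽_q} S₃^{(m)}(u, v). (This count is one less than the number N_{m,3}(β) of rational places of the fibre product L_{m,3,β} = 𝔽_{q^m}(x, y_a, y_b) of the two Artin–Schreier curves.) -/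
open Finset

/-- The canonical additive character of a finite field `E` of characteristic `p`:
`e(x) = exp(2πi · Tr_{E/𝔽_p}(x) / p)`. -/
noncomputable def addChar (p : ℕ) (E : Type) [Field E] [Fintype E] [Algebra (ZMod p) E]
    (x : E) : ℂ :=
  Complex.exp (2 * Real.pi * Complex.I * ((Algebra.trace (ZMod p) E x).val : ℂ) / p)

/-- The cubic exponential sum `S₃^{(m)}(u,v) = Σ_{z ∈ 𝔽_{q^m}} e(uz + vz³)` for `u, v ∈ 𝔽_q`. -/
noncomputable def S3 (p : ℕ) (F E : Type) [Field F] [Fintype F] [Field E] [Fintype E]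
    [Algebra (ZMod p) E] [Algebra F E] (u v : F) : ℂ :=
  ∑ z : E, addChar p E (algebraMap F E u * z + algebraMap F E v * z ^ 3)

set_option linter.unusedSectionVars false
set_option maxHeartbeats 1000000

section Aux
variable (p : ℕ) [hp : Fact p.Prime] (E : Type) [Field E] [Fintype E] [Algebra (ZMod p) E]

lemma addChar_eq_pow (x : E) :
    addChar p E x =
      Complex.exp (2 * Real.pi * Complex.I / p) ^ (Algebra.trace (ZMod p) E x).val := by
  rw [addChar, ← Complex.exp_nat_mul]
  ring_nf

lemma zeta_pow_mod (n : ℕ) :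
    Complex.exp (2 * Real.pi * Complex.I / p) ^ (n % p) =
      Complex.exp (2 * Real.pi * Complex.I / p) ^ n := by
  have h1 := (Complex.isPrimitiveRoot_exp p hp.out.ne_zero).pow_eq_one
  conv_rhs => rw [← Nat.mod_add_div n p]
  rw [pow_add, pow_mul, h1, one_pow, mul_one]

lemma addChar_zero : addChar p E 0 = 1 := by
  simp [addChar]

lemma addChar_add (x y : E) : addChar p E (x + y) = addChar p E x * addChar p E y := by
  rw [addChar_eq_pow, addChar_eq_pow, addChar_eq_pow, map_add, ZMod.val_add,
    zeta_pow_mod, pow_add]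

lemma addChar_eq_one_of_trace_zero {x : E} (h : Algebra.trace (ZMod p) E x = 0) :
    addChar p E x = 1 := by
  simp [addChar, h]

noncomputable def psiE : AddChar E ℂ := ⟨addChar p E, addChar_zero p E, addChar_add p E⟩

lemma psiE_apply (x : E) : psiE p E x = addChar p E x := rfl

lemma exists_addChar_ne_one {c : E} (hc : c ≠ 0) : ∃ x : E, addChar p E (c * x) ≠ 1 := by
  obtain ⟨b, hb⟩ : ∃ b : E, Algebra.trace (ZMod p) E (c * b) ≠ 0 := by
    by_contra hf
    push_neg at hf
    have := traceForm_nondegenerate (ZMod p) E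
    exact hc (this.1 c (by simpa [Algebra.traceForm_apply] using hf))
  refine ⟨b, ?_⟩
  rw [addChar_eq_pow]
  have hval : (Algebra.trace (ZMod p) E (c * b)).val ≠ 0 := by
    simpa [ZMod.val_eq_zero] using hb
  exact (Complex.isPrimitiveRoot_exp p hp.out.ne_zero).pow_ne_one_of_pos_of_lt
    hval (ZMod.val_lt _)

lemma sum_addChar_mul {c : E} (hc : c ≠ 0) : ∑ x : E, addChar p E (c * x) = 0 := by
  have hne : (psiE p E).mulShift c ≠ 1 := by
    rw [AddChar.ne_one_iff]
    obtain ⟨x, hx⟩ := exists_addChar_ne_one p E hc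
    exact ⟨x, by simpa [AddChar.mulShift_apply, psiE_apply] using hx⟩
  have := AddChar.sum_eq_zero_of_ne_one hne
  simpa [AddChar.mulShift_apply, psiE_apply] using this

lemma trace_pow_p (x : E) :
    Algebra.trace (ZMod p) E (x ^ p) = Algebra.trace (ZMod p) E x := by
  haveI : CharP E p := charP_of_injective_algebraMap' (ZMod p) p
  apply (algebraMap (ZMod p) E).injective
  rw [trace_eq_sum_automorphisms]
  calc ∑ σ : E ≃ₐ[ZMod p] E, σ (x ^ p)
      = (∑ σ : E ≃ₐ[ZMod p] E, σ x) ^ p := by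
        rw [sum_pow_char]; simp [map_pow]
    _ = (algebraMap (ZMod p) E (Algebra.trace (ZMod p) E x)) ^ p := by
        exact congrArg (· ^ p) (trace_eq_sum_automorphisms x).symm
    _ = algebraMap (ZMod p) E ((Algebra.trace (ZMod p) E x) ^ p) := by rw [map_pow]
    _ = _ := by rw [ZMod.pow_card]

lemma trace_pow_pow (x : E) (r : ℕ) :
    Algebra.trace (ZMod p) E (x ^ p ^ r) = Algebra.trace (ZMod p) E x := by
  induction r with
  | zero => simp
  | succ n ih => rw [pow_succ, pow_mul, trace_pow_p, ih]

end Aux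

section Aux2
variable (p r : ℕ) [hp : Fact p.Prime] (F E : Type) [Field F] [Fintype F] [Field E] [Fintype E]
  [Algebra (ZMod p) E] [Algebra F E]

noncomputable def frobSub : E →+ E where
  toFun y := y ^ p ^ r - y
  map_zero' := by
    simp [zero_pow (pow_ne_zero r hp.out.ne_zero)]
  map_add' x y := by
    haveI : CharP E p := charP_of_injective_algebraMap' (ZMod p) p
    show (x + y) ^ p ^ r - (x + y) = (x ^ p ^ r - x) + (y ^ p ^ r - y)
    rw [add_pow_char_pow]; ring

@[simp] lemma frobSub_apply (y : E) : frobSub p r E y = y ^ p ^ r - y := rfl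

lemma card_pow_eq_self (hr : 0 < r) (hF : Fintype.card F = p ^ r) :
    Nat.card {y : E // y ^ p ^ r = y} = p ^ r := by
  classical
  have hq2 : 2 ≤ p ^ r := by
    calc 2 ≤ p := hp.out.two_le
    _ = p ^ 1 := (pow_one p).symm
    _ ≤ p ^ r := Nat.pow_le_pow_right hp.out.one_lt.le hr
  rw [Nat.card_eq_fintype_card, Fintype.card_subtype]
  apply le_antisymm
  · set P : Polynomial E := Polynomial.X ^ p ^ r - Polynomial.X with hPdef
    have hPdeg : P.natDegree = p ^ r := by
      rw [hPdef]
      compute_degree!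
      · rw [if_neg (by omega)]; norm_num
      · omega
    have hP0 : P ≠ 0 := by
      intro h
      rw [h, Polynomial.natDegree_zero] at hPdeg
      omega
    calc (Finset.univ.filter fun y : E => y ^ p ^ r = y).card
        ≤ P.roots.toFinset.card := by
          apply Finset.card_le_card
          intro y hy
          simp only [Finset.mem_filter] at hy
          rw [Multiset.mem_toFinset, Polynomial.mem_roots hP0]
          simp [Polynomial.IsRoot, hPdef, sub_eq_zero, hy.2]
      _ ≤ Multiset.card P.roots := Multiset.toFinset_card_le _
      _ ≤ P.natDegree := P.card_roots'
      _ = p ^ r := hPdeg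
  · calc p ^ r = (Finset.univ.image (algebraMap F E)).card := by
          rw [Finset.card_image_of_injective _ (algebraMap F E).injective,
            Finset.card_univ, hF]
      _ ≤ _ := by
          apply Finset.card_le_card
          intro y hy
          simp only [Finset.mem_image] at hy
          obtain ⟨c, _, rfl⟩ := hy
          simp only [Finset.mem_filter, Finset.mem_univ, true_and]
          rw [← map_pow, ← hF, FiniteField.pow_card]

open Classical in
lemma card_fiber (hr : 0 < r) (hF : Fintype.card F = p ^ r) (w : E) :
    Nat.card {y : E // y ^ p ^ r - y = w} =
      if ∃ y0 : E, y0 ^ p ^ r - y0 = w then p ^ r else 0 := by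
  classical
  haveI : CharP E p := charP_of_injective_algebraMap' (ZMod p) p
  split_ifs with h
  · obtain ⟨y0, hy0⟩ := h
    refine Eq.trans (Nat.card_congr ?_) (card_pow_eq_self p r F E hr hF)
    refine ⟨fun y => ⟨y.1 - y0, ?_⟩, fun k => ⟨k.1 + y0, ?_⟩, ?_, ?_⟩
    · rw [sub_pow_char_pow]
      have h1 := y.2
      linear_combination h1 - hy0
    · rw [add_pow_char_pow]
      have h2 := k.2
      linear_combination h2 + hy0
    · intro y; apply Subtype.ext; simp
    · intro k; apply Subtype.ext; simp
  · have : IsEmpty {y : E // y ^ p ^ r - y = w} := ⟨fun y => h ⟨y.1, y.2⟩⟩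
    exact Nat.card_of_isEmpty

lemma card_range_mul (hr : 0 < r) (hF : Fintype.card F = p ^ r) :
    Nat.card {w : E // ∃ y : E, y ^ p ^ r - y = w} * p ^ r = Fintype.card E := by
  set φ := frobSub p r E with hφ
  have h1 : Nat.card E = Nat.card (E ⧸ φ.ker) * Nat.card φ.ker :=
    AddSubgroup.card_eq_card_quotient_mul_card_addSubgroup φ.ker
  have h2 : Nat.card (E ⧸ φ.ker) = Nat.card φ.range :=
    Nat.card_congr (QuotientAddGroup.quotientKerEquivRange φ).toEquiv
  have h3 : Nat.card φ.ker = p ^ r := by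
    rw [← card_pow_eq_self p r F E hr hF]
    apply Nat.card_congr (Equiv.subtypeEquivRight ?_)
    intro y
    simp [hφ, AddMonoidHom.mem_ker, sub_eq_zero]
  have h4 : Nat.card {w : E // ∃ y : E, y ^ p ^ r - y = w} = Nat.card φ.range := by
    apply Nat.card_congr (Equiv.subtypeEquivRight ?_)
    intro w
    simp [hφ, AddMonoidHom.mem_range]
  rw [h4, ← h3, ← h2, ← Nat.card_eq_fintype_card]
  exact h1.symm

end Aux2

section Aux3
variable (p r : ℕ) [hp : Fact p.Prime] (F E : Type) [Field F] [Fintype F] [Field E] [Fintype E]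
  [Algebra (ZMod p) E] [Algebra F E]

/-- The additive character sum over `v ∈ F` of `e(v w)` as a function of `w`. -/
lemma char_sum_eq (w : E)
    (H : Set E) (hH : H = {w : E | ∀ v : F, addChar p E (algebraMap F E v * w) = 1})
    [Decidable (w ∈ H)] :
    ∑ v : F, addChar p E (algebraMap F E v * w) =
      if w ∈ H then (Fintype.card F : ℂ) else 0 := by
  subst hH
  set χ : AddChar F ℂ := (psiE p E).compAddMonoidHom
    (AddMonoidHom.mk' (fun v : F => algebraMap F E v * w)
      (fun a b => by simp only [map_add, add_mul])) with hχ
  have hχap : ∀ v : F, χ v = addChar p E (algebraMap F E v * w) := fun v => rfl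
  split_ifs with h
  · rw [Finset.sum_congr rfl (fun v _ => h v), Finset.sum_const, Finset.card_univ]
    simp
  · simp only [Set.mem_setOf_eq, not_forall] at h
    obtain ⟨v0, hv0⟩ := h
    have hne : χ ≠ 1 := AddChar.ne_one_iff.2 ⟨v0, by rw [hχap]; exact hv0⟩
    have := AddChar.sum_eq_zero_of_ne_one hne
    rw [← this]
    exact Finset.sum_congr rfl fun v _ => (hχap v).symm

lemma fiber_card_eq_char_sum (hr : 0 < r) (hF : Fintype.card F = p ^ r) (w : E) :
    ((Nat.card {y : E // y ^ p ^ r - y = w} : ℕ) : ℂ) =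
      ∑ v : F, addChar p E (algebraMap F E v * w) := by
  classical
  haveI : CharP E p := charP_of_injective_algebraMap' (ZMod p) p
  set R : Set E := {w : E | ∃ y : E, y ^ p ^ r - y = w} with hR
  set H : Set E := {w : E | ∀ v : F, addChar p E (algebraMap F E v * w) = 1} with hHdef
  -- R ⊆ H
  have hRH : R ⊆ H := by
    rintro _ ⟨y, rfl⟩ v
    have hvq : (algebraMap F E v) ^ p ^ r = algebraMap F E v := by
      rw [← map_pow, ← hF, FiniteField.pow_card]
    have harg : algebraMap F E v * (y ^ p ^ r - y) =
        (algebraMap F E v * y) ^ p ^ r - algebraMap F E v * y := by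
      rw [mul_pow, hvq]; ring
    rw [harg]
    apply addChar_eq_one_of_trace_zero
    rw [map_sub, trace_pow_pow]
    exact sub_self _
  -- total sum over w of the character sums equals card E
  have htot : ∑ w : E, ∑ v : F, addChar p E (algebraMap F E v * w) =
      (Fintype.card E : ℂ) := by
    rw [Finset.sum_comm]
    have hv : ∀ v : F, ∑ w : E, addChar p E (algebraMap F E v * w) =
        if v = 0 then (Fintype.card E : ℂ) else 0 := by
      intro v
      split_ifs with hv0
      · subst hv0
        simp [addChar_zero, Finset.card_univ]
      · exact sum_addChar_mul p E (fun hc => hv0 ((algebraMap F E).injective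
          (by rw [hc, map_zero])))
    rw [Finset.sum_congr rfl fun v _ => hv v]
    simp
  -- cardinality of H
  have hHcard : Nat.card H * p ^ r = Fintype.card E := by
    have h1 : ∑ w : E, ∑ v : F, addChar p E (algebraMap F E v * w) =
        ((Finset.univ.filter fun w : E => w ∈ H).card : ℂ) * (p ^ r : ℕ) := by
      calc ∑ w : E, ∑ v : F, addChar p E (algebraMap F E v * w)
          = ∑ w : E, (if w ∈ H then (Fintype.card F : ℂ) else 0) :=
            Finset.sum_congr rfl fun w _ => char_sum_eq p F E w H hHdef
        _ = ∑ w ∈ Finset.univ.filter (fun w : E => w ∈ H), (Fintype.card F : ℂ) :=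
            (Finset.sum_filter _ _).symm
        _ = _ := by simp [hF, mul_comm]
    rw [htot] at h1
    have h2 : ((Finset.univ.filter fun w : E => w ∈ H).card * p ^ r : ℕ)
        = (Fintype.card E : ℕ) := by
      exact_mod_cast h1.symm
    rw [← h2, Nat.card_coe_set_eq]
    congr 1
    rw [Set.ncard_eq_toFinset_card']
    congr 1
    ext w
    simp
  -- R = H
  have hReqH : R = H := by
    have hRcard : Nat.card R * p ^ r = Fintype.card E := by
      rw [← card_range_mul p r F E hr hF]
      rfl
    apply Set.eq_of_subset_of_ncard_le hRH
    rw [← Nat.card_coe_set_eq, ← Nat.card_coe_set_eq]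
    exact le_of_eq (Nat.eq_of_mul_eq_mul_right (Nat.pow_pos hp.out.pos)
      (hHcard.trans hRcard.symm))
  -- conclude
  rw [char_sum_eq p F E w H hHdef, card_fiber p r F E hr hF w, hF]
  have hiff : (∃ y0 : E, y0 ^ p ^ r - y0 = w) ↔ w ∈ H := by
    rw [← hReqH]; exact Iff.rfl
  by_cases h : ∃ y0 : E, y0 ^ p ^ r - y0 = w
  · rw [if_pos h, if_pos (hiff.1 h)]; try norm_cast
  · rw [if_neg h, if_neg (fun hw => h (hiff.2 hw))]; try norm_cast

end Aux3

/-- Let `p ≠ 3` be a prime, `q = p^r`, `m ≥ 1`, `a ≠ b` in `𝔽_q`, and `β ∈ 𝔽_{q^m}`.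
The number of triples `(x,y,z) ∈ 𝔽_{q^m}³` with `y^q - y = x + a(β + x³)` and
`z^q - z = x + b(β + x³)` equals `q^m + Σ_{v ∈ 𝔽_q^*} e(vβ) Σ_{u ∈ 𝔽_q} S₃^{(m)}(u,v)`. -/
theorem affine_count_fibre_product_cubic
    (p r m : ℕ) (hp : p.Prime) (hp3 : p ≠ 3) (hr : 0 < r) (hm : 0 < m)
    (F E : Type) [Field F] [Fintype F] [DecidableEq F] [Field E] [Fintype E]
    [Algebra (ZMod p) E] [Algebra F E]
    (hF : Fintype.card F = p ^ r) (hE : Fintype.card E = (p ^ r) ^ m)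
    (a b : F) (hab : a ≠ b) (β : E) :
    (Nat.card {t : E × E × E //
        t.2.1 ^ (p ^ r) - t.2.1 = t.1 + algebraMap F E a * (β + t.1 ^ 3) ∧
        t.2.2 ^ (p ^ r) - t.2.2 = t.1 + algebraMap F E b * (β + t.1 ^ 3)} : ℂ) =
      ((p : ℂ) ^ r) ^ m +
        ∑ v ∈ Finset.univ.filter (fun v : F => v ≠ 0),
          addChar p E (algebraMap F E v * β) * ∑ u : F, S3 p F E u v := by
  haveI : Fact p.Prime := ⟨hp⟩
  classical
  -- Step 1: factor the count over x
  have h1 : Nat.card {t : E × E × E //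
        t.2.1 ^ (p ^ r) - t.2.1 = t.1 + algebraMap F E a * (β + t.1 ^ 3) ∧
        t.2.2 ^ (p ^ r) - t.2.2 = t.1 + algebraMap F E b * (β + t.1 ^ 3)} =
      ∑ x : E, Nat.card {y : E // y ^ p ^ r - y = x + algebraMap F E a * (β + x ^ 3)} *
        Nat.card {z : E // z ^ p ^ r - z = x + algebraMap F E b * (β + x ^ 3)} := by
    have e1 : {t : E × E × E //
        t.2.1 ^ (p ^ r) - t.2.1 = t.1 + algebraMap F E a * (β + t.1 ^ 3) ∧
        t.2.2 ^ (p ^ r) - t.2.2 = t.1 + algebraMap F E b * (β + t.1 ^ 3)} ≃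
        Σ x : E, ({y : E // y ^ p ^ r - y = x + algebraMap F E a * (β + x ^ 3)} ×
          {z : E // z ^ p ^ r - z = x + algebraMap F E b * (β + x ^ 3)}) :=
      { toFun := fun t => ⟨t.1.1, ⟨⟨t.1.2.1, t.2.1⟩, ⟨t.1.2.2, t.2.2⟩⟩⟩
        invFun := fun s => ⟨⟨s.1, s.2.1.1, s.2.2.1⟩, ⟨s.2.1.2, s.2.2.2⟩⟩
        left_inv := fun t => rfl
        right_inv := fun s => rfl }
    rw [Nat.card_congr e1, Nat.card_eq_fintype_card, Fintype.card_sigma]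
    exact Finset.sum_congr rfl fun x _ => by
      rw [Fintype.card_prod, Nat.card_eq_fintype_card, Nat.card_eq_fintype_card]
  rw [h1]
  push_cast
  -- Step 2: fibers as character sums
  have h2 : ∀ x : E,
      ((Nat.card {y : E // y ^ p ^ r - y = x + algebraMap F E a * (β + x ^ 3)} : ℂ) *
       (Nat.card {z : E // z ^ p ^ r - z = x + algebraMap F E b * (β + x ^ 3)} : ℂ)) =
      ∑ vv : F × F, addChar p E
        (algebraMap F E vv.1 * (x + algebraMap F E a * (β + x ^ 3)) +
         algebraMap F E vv.2 * (x + algebraMap F E b * (β + x ^ 3))) := by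
    intro x
    rw [fiber_card_eq_char_sum p r F E hr hF, fiber_card_eq_char_sum p r F E hr hF,
      Finset.sum_mul_sum]
    rw [← Fintype.sum_prod_type
      (f := fun vv : F × F => addChar p E (algebraMap F E vv.1 *
        (x + algebraMap F E a * (β + x ^ 3))) * addChar p E (algebraMap F E vv.2 *
        (x + algebraMap F E b * (β + x ^ 3))))]
    exact Finset.sum_congr rfl fun vv _ => (addChar_add p E _ _).symm
  rw [Finset.sum_congr rfl fun x _ => h2 x, Finset.sum_comm]
  -- Step 3: reindex the pairs (v1, v2) ↦ (v1 + v2, v1 * a + v2 * b)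
  have hd : a - b ≠ 0 := sub_ne_zero.mpr hab
  have h3 : ∑ vv : F × F, ∑ x : E, addChar p E
        (algebraMap F E vv.1 * (x + algebraMap F E a * (β + x ^ 3)) +
         algebraMap F E vv.2 * (x + algebraMap F E b * (β + x ^ 3))) =
      ∑ uv : F × F, ∑ x : E, addChar p E
        (algebraMap F E uv.1 * x + algebraMap F E uv.2 * (β + x ^ 3)) := by
    let σ : F × F ≃ F × F :=
      { toFun := fun vv => (vv.1 + vv.2, vv.1 * a + vv.2 * b)
        invFun := fun uv => ((uv.2 - b * uv.1) / (a - b), (a * uv.1 - uv.2) / (a - b))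
        left_inv := fun vv => by
          apply Prod.ext
          · show (vv.1 * a + vv.2 * b - b * (vv.1 + vv.2)) / (a - b) = vv.1
            field_simp
            ring
          · show (a * (vv.1 + vv.2) - (vv.1 * a + vv.2 * b)) / (a - b) = vv.2
            field_simp
            ring
        right_inv := fun uv => by
          apply Prod.ext
          · show (uv.2 - b * uv.1) / (a - b) + (a * uv.1 - uv.2) / (a - b) = uv.1
            field_simp
            ring
          · show (uv.2 - b * uv.1) / (a - b) * a + (a * uv.1 - uv.2) / (a - b) * b = uv.2
            field_simp
            ring }
    rw [← Equiv.sum_comp σ (fun uv : F × F => ∑ x : E, addChar p E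
      (algebraMap F E uv.1 * x + algebraMap F E uv.2 * (β + x ^ 3)))]
    refine Finset.sum_congr rfl fun vv _ => Finset.sum_congr rfl fun x _ => ?_
    congr 1
    show algebraMap F E vv.1 * (x + algebraMap F E a * (β + x ^ 3)) +
         algebraMap F E vv.2 * (x + algebraMap F E b * (β + x ^ 3)) =
      algebraMap F E (vv.1 + vv.2) * x +
        algebraMap F E (vv.1 * a + vv.2 * b) * (β + x ^ 3)
    rw [map_add, map_add, map_mul, map_mul]
    ring
  rw [h3]
  -- Step 4: pull out e(vβ)
  have h4 : ∀ uv : F × F, ∑ x : E, addChar p E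
        (algebraMap F E uv.1 * x + algebraMap F E uv.2 * (β + x ^ 3)) =
      addChar p E (algebraMap F E uv.2 * β) * S3 p F E uv.1 uv.2 := by
    intro uv
    rw [S3, Finset.mul_sum]
    refine Finset.sum_congr rfl fun x _ => ?_
    rw [← addChar_add]
    congr 1
    ring
  rw [Finset.sum_congr rfl fun uv _ => h4 uv]
  -- Step 5: iterated sums, v outermost
  have h5 : ∑ uv : F × F, addChar p E (algebraMap F E uv.2 * β) * S3 p F E uv.1 uv.2 =
      ∑ v : F, addChar p E (algebraMap F E v * β) * ∑ u : F, S3 p F E u v := by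
    rw [Fintype.sum_prod_type
      (f := fun uv : F × F => addChar p E (algebraMap F E uv.2 * β) * S3 p F E uv.1 uv.2),
      Finset.sum_comm]
    exact Finset.sum_congr rfl fun v _ => by rw [Finset.mul_sum]
  rw [h5]
  -- Step 6: split off v = 0
  rw [← Finset.sum_filter_add_sum_filter_not Finset.univ (fun v : F => v ≠ 0)
    (fun v : F => addChar p E (algebraMap F E v * β) * ∑ u : F, S3 p F E u v)]
  have h6 : (Finset.univ.filter fun v : F => ¬ v ≠ 0) = {0} := by
    ext v
    simp [not_not]
  rw [h6, Finset.sum_singleton]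
  have h7 : addChar p E (algebraMap F E (0 : F) * β) * ∑ u : F, S3 p F E u (0 : F) =
      ((p : ℂ) ^ r) ^ m := by
    rw [map_zero, zero_mul, addChar_zero, one_mul]
    have hS : ∀ u : F, S3 p F E u (0 : F) =
        if u = 0 then ((Fintype.card E : ℕ) : ℂ) else 0 := by
      intro u
      rw [S3]
      split_ifs with hu
      · subst hu
        simp [addChar_zero, Finset.card_univ]
      · rw [Finset.sum_congr rfl fun z _ => by
          rw [show algebraMap F E u * z + algebraMap F E (0 : F) * z ^ 3 =
            algebraMap F E u * z by simp]]
        exact sum_addChar_mul p E (fun hc => hu ((algebraMap F E).injective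
          (by rw [hc, map_zero])))
    rw [Finset.sum_congr rfl fun u _ => hS u]
    simp only [Finset.sum_ite_eq', Finset.mem_univ, if_true]
    rw [hE]
    push_cast
    ring
  rw [h7]
  ring
end

section
/- Let p be a prime, q = p^r, m ≥ 1, and β ∈ 𝔽_{q^m}. Suppose either d = −1, or d = 3 with p = 2 and r odd. Then Σ_{v ∈ 𝔽_q^*} e(vβ) · Σ_{u ∈ 𝔽_q^*} S_d^{(m)}(u, v) = S · Σ_{u ∈ 𝔽_q^*} S_d^{(m)}(1, u), where S = q − 1 if Tr_{𝔽_{q^m}/𝔽_q}(β) = 0 and S = −1 if Tr_{𝔽_{q^m}/𝔽_q}(β) ≠ 0. In particular, if Tr_{𝔽_{q^m}/𝔽_q}(β₁) = 0 then N_{m,d}(β₁) = N_{m,d}(0), and if Tr_{𝔽_{q^m}/𝔽_q}(β₂) ≠ 0 then N_{m,d}(β₂) − (q^m + 1) = −(N_{m,d}(0) − (q^m + 1))/(q − 1), where N_{m,d}(β) − (q^m + 1) = Σ_{v ∈ 𝔽_q^*} e(vβ) Σ_{u ∈ 𝔽_q^*} S_d^{(m)}(u, v). -/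
open Finset

set_option linter.unusedSectionVars false

private lemma aux_div (P A B K M C : ℂ) (hP : P ≠ 0) (h : P * K + M = A + B) :
    C * A / P + C * B / P = C * M / P + K * C := by
  rw [← add_div, div_add' _ _ _ hP, div_eq_div_iff hP hP]
  linear_combination (-C) * P * h

lemma exp_val_add (p : ℕ) [NeZero p] (a b : ZMod p) :
    Complex.exp (2 * Real.pi * Complex.I * (((a + b).val : ℕ) : ℂ) / p) =
      Complex.exp (2 * Real.pi * Complex.I * ((a.val : ℕ) : ℂ) / p) *
        Complex.exp (2 * Real.pi * Complex.I * ((b.val : ℕ) : ℂ) / p) := by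
  have hp : (p : ℂ) ≠ 0 := Nat.cast_ne_zero.mpr (NeZero.ne p)
  rw [← Complex.exp_add, ZMod.val_add]
  have hdm : (p : ℂ) * (((a.val + b.val) / p : ℕ) : ℂ) + (((a.val + b.val) % p : ℕ) : ℂ)
      = ((a.val : ℕ) : ℂ) + ((b.val : ℕ) : ℂ) := by
    have h0 := Nat.div_add_mod (a.val + b.val) p
    calc (p : ℂ) * (((a.val + b.val) / p : ℕ) : ℂ) + (((a.val + b.val) % p : ℕ) : ℂ)
        = ((p * ((a.val + b.val) / p) + (a.val + b.val) % p : ℕ) : ℂ) := by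
          rw [Nat.cast_add, Nat.cast_mul]
      _ = ((a.val + b.val : ℕ) : ℂ) := by rw [h0]
      _ = ((a.val : ℕ) : ℂ) + ((b.val : ℕ) : ℂ) := by rw [Nat.cast_add]
  rw [aux_div (p : ℂ) _ _ _ _ (2 * Real.pi * Complex.I) hp hdm, Complex.exp_add]
  have h1 : ((((a.val + b.val) / p : ℕ) : ℂ)) * (2 * Real.pi * Complex.I)
      = ((((a.val + b.val) / p : ℕ) : ℤ) : ℂ) * (2 * Real.pi * Complex.I) := by
    rw [Int.cast_natCast]
  rw [h1, Complex.exp_int_mul_two_pi_mul_I, mul_one]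


/-- The sum `S_d^{(m)}(u,v)`, where `z` runs over `𝔽_{q^m}^*` if `d = -1` and over all of
`𝔽_{q^m}` if `d = 3`: `S_d^{(m)}(u,v) = Σ_z e(uz + vz^d)`. -/
noncomputable def Sd (p : ℕ) (F E : Type) [Field F] [Fintype F] [Field E] [Fintype E]
    [DecidableEq E] [Algebra (ZMod p) E] [Algebra F E] (d : ℤ) (u v : F) : ℂ :=
  ∑ z ∈ Finset.univ.filter (fun z : E => z ≠ 0 ∨ d = 3),
    addChar p E (algebraMap F E u * z + algebraMap F E v * z ^ d)

/-- The double sum `Σ_{v ∈ 𝔽_q^*} e(vβ) Σ_{u ∈ 𝔽_q^*} S_d^{(m)}(u,v)`, which equals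
`N_{m,d}(β) - (q^m + 1)`. -/
noncomputable def dblSum (p : ℕ) (F E : Type) [Field F] [Fintype F] [DecidableEq F]
    [Field E] [Fintype E] [DecidableEq E] [Algebra (ZMod p) E] [Algebra F E]
    (d : ℤ) (β : E) : ℂ :=
  ∑ v ∈ Finset.univ.filter (fun v : F => v ≠ 0),
    addChar p E (algebraMap F E v * β) *
      ∑ u ∈ Finset.univ.filter (fun u : F => u ≠ 0), Sd p F E d u v

section AC
variable (p : ℕ) [NeZero p] (E : Type) [Field E] [Fintype E] [Algebra (ZMod p) E]

/-- `addChar` as a bundled additive character. -/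
noncomputable def eAC : AddChar E ℂ where
  toFun := addChar p E
  map_zero_eq_one' := by
    simp [addChar, map_zero, ZMod.val_zero, Complex.exp_zero]
  map_add_eq_mul' := by
    intro a b
    unfold addChar
    rw [map_add]
    exact exp_val_add p _ _

lemma eAC_apply (x : E) : eAC p E x = addChar p E x := rfl

lemma eAC_eq_one_iff (x : E) : eAC p E x = 1 ↔ Algebra.trace (ZMod p) E x = 0 := by
  constructor
  · intro h
    have hp : (p : ℂ) ≠ 0 := Nat.cast_ne_zero.mpr (NeZero.ne p)
    rw [eAC_apply, addChar, Complex.exp_eq_one_iff] at h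
    obtain ⟨n, hn⟩ := h
    set a := Algebra.trace (ZMod p) E x with ha
    have h2 : (2 * (Real.pi : ℂ) * Complex.I) ≠ 0 := by
      simp [Real.pi_ne_zero, Complex.I_ne_zero]
    rw [div_eq_iff hp] at hn
    have hval : (2 * (Real.pi : ℂ) * Complex.I) * (a.val : ℂ)
        = (2 * (Real.pi : ℂ) * Complex.I) * ((n : ℂ) * (p : ℂ)) := by linear_combination hn
    have hval2 : (a.val : ℂ) = (n : ℂ) * (p : ℂ) := mul_left_cancel₀ h2 hval
    have hint : (a.val : ℤ) = n * p := by exact_mod_cast hval2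
    have hdvd : (p : ℤ) ∣ (a.val : ℤ) := ⟨n, by rw [hint]; ring⟩
    have hdvd' : p ∣ a.val := Int.ofNat_dvd.mp hdvd
    have : a.val = 0 := Nat.eq_zero_of_dvd_of_lt hdvd' (ZMod.val_lt a)
    rwa [← ZMod.val_eq_zero]
  · intro h
    rw [eAC_apply, addChar, h, ZMod.val_zero]
    simp
end AC

section Sum
variable (p : ℕ) [Fact p.Prime]
variable (F E : Type) [Field F] [Fintype F] [Field E] [Fintype E]
  [Algebra (ZMod p) F] [Algebra (ZMod p) E] [Algebra F E] [IsScalarTower (ZMod p) F E]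

/-- `v ↦ e(vβ)` as an additive character of `F`. -/
noncomputable def psiBeta (β : E) : AddChar F ℂ :=
  (eAC p E).compAddMonoidHom
    ((AddMonoidHom.mulRight β).comp (algebraMap F E).toAddMonoidHom)

lemma psiBeta_apply (β : E) (v : F) :
    psiBeta p F E β v = addChar p E (algebraMap F E v * β) := rfl

lemma psiBeta_eq_zero_iff (β : E) :
    psiBeta p F E β = 0 ↔ Algebra.trace F E β = 0 := by
  have htr : ∀ x : E, Algebra.trace (ZMod p) E x
      = Algebra.trace (ZMod p) F (Algebra.trace F E x) := fun x =>
    (Algebra.trace_trace (S := F) x).symm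
  constructor
  · intro h
    by_contra ht
    obtain ⟨c, hc⟩ := Algebra.trace_surjective (ZMod p) F 1
    have h1 : psiBeta p F E β (c * (Algebra.trace F E β)⁻¹) = 1 := by rw [h]; rfl
    rw [psiBeta_apply, ← eAC_apply, eAC_eq_one_iff, htr] at h1
    rw [← Algebra.smul_def, map_smul, smul_eq_mul, mul_assoc,
      inv_mul_cancel₀ ht, mul_one, hc] at h1
    exact one_ne_zero h1
  · intro h
    apply DFunLike.ext
    intro v
    rw [AddChar.zero_apply, psiBeta_apply, ← eAC_apply, eAC_eq_one_iff, htr,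
      ← Algebra.smul_def, map_smul, smul_eq_mul, h, mul_zero, map_zero]

open scoped Classical in
lemma sum_psiBeta (β : E) :
    ∑ v : F, addChar p E (algebraMap F E v * β)
      = if Algebra.trace F E β = 0 then (Fintype.card F : ℂ) else 0 := by
  classical
  have := AddChar.sum_eq_ite (psiBeta p F E β)
  simp only [psiBeta_apply] at this
  rw [this]
  exact if_congr (psiBeta_eq_zero_iff p F E β) rfl rfl

end Sum


section SdLemmas
variable (p : ℕ) (F E : Type) [Field F] [Fintype F] [Field E] [Fintype E]
  [DecidableEq E] [Algebra (ZMod p) E] [Algebra F E]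

lemma Sd_neg_one (u v : F) (hu : u ≠ 0) :
    Sd p F E (-1) u v = Sd p F E (-1) 1 (u * v) := by
  unfold Sd
  have hfilter : Finset.univ.filter (fun z : E => z ≠ 0 ∨ (-1 : ℤ) = 3)
      = Finset.univ.filter (fun z : E => z ≠ 0) := by
    apply Finset.filter_congr
    intro z _
    simp
  rw [hfilter]
  have hc : algebraMap F E u ≠ 0 := by
    simpa using (map_ne_zero (algebraMap F E)).mpr hu
  refine Finset.sum_nbij' (fun z => algebraMap F E u * z)
    (fun z => (algebraMap F E u)⁻¹ * z) ?_ ?_ ?_ ?_ ?_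
  · intro a ha
    simp only [Finset.mem_filter, Finset.mem_univ, true_and] at ha ⊢
    exact mul_ne_zero hc ha
  · intro a ha
    simp only [Finset.mem_filter, Finset.mem_univ, true_and] at ha ⊢
    exact mul_ne_zero (inv_ne_zero hc) ha
  · intro a _; field_simp
  · intro a _; field_simp
  · intro a ha
    simp only [Finset.mem_filter, Finset.mem_univ, true_and] at ha
    congr 1
    rw [zpow_neg_one, zpow_neg_one, map_one, one_mul, map_mul, mul_inv]
    field_simp

lemma Sd_three (u v : F) (hu : u ≠ 0) :
    Sd p F E 3 u v = Sd p F E 3 1 (v * (u⁻¹) ^ 3) := by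
  unfold Sd
  have hfilter : Finset.univ.filter (fun z : E => z ≠ 0 ∨ (3 : ℤ) = 3)
      = Finset.univ := Finset.filter_true_of_mem (fun z _ => Or.inr rfl)
  rw [hfilter]
  have hc : algebraMap F E u ≠ 0 := (map_ne_zero (algebraMap F E)).mpr hu
  refine Fintype.sum_equiv (Equiv.mulLeft₀ (algebraMap F E u) hc) _ _ ?_
  intro z
  simp only [Equiv.mulLeft₀_apply]
  congr 1
  have h3 : ∀ w : E, w ^ (3 : ℤ) = w ^ (3 : ℕ) := fun w => by
    rw [show (3 : ℤ) = ((3 : ℕ) : ℤ) from rfl, zpow_natCast]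
  rw [h3, h3, map_one, one_mul, map_mul, map_pow, map_inv₀]
  field_simp
end SdLemmas

lemma cube_bijective (F : Type) [Field F] [Fintype F] [DecidableEq F]
    (h : Nat.Coprime 3 (Fintype.card F - 1)) :
    Function.Bijective (fun x : F => x ^ 3) := by
  rw [← Finite.injective_iff_bijective]
  intro x y hxy
  simp only at hxy
  by_cases hx : x = 0
  · subst hx
    have h0 : y ^ 3 = 0 := by rw [← hxy]; simp
    exact ((pow_eq_zero_iff (n := 3) (by norm_num)).mp h0).symm
  · have hy : y ≠ 0 := by
      intro hy; subst hy; simp only [zero_pow, ne_eq, OfNat.ofNat_ne_zero,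
        not_false_eq_true] at hxy
      exact hx ((pow_eq_zero_iff (n := 3) (by norm_num)).mp hxy)
    set a : Fˣ := Units.mk0 x hx
    set b : Fˣ := Units.mk0 y hy
    have hab : a ^ 3 = b ^ 3 := by
      ext; simpa [a, b] using hxy
    have h1 : (a * b⁻¹) ^ 3 = 1 := by
      rw [mul_pow, hab, inv_pow, mul_inv_cancel]
    have h2 : orderOf (a * b⁻¹) ∣ 3 := orderOf_dvd_of_pow_eq_one h1
    have h3 : orderOf (a * b⁻¹) ∣ Fintype.card Fˣ := orderOf_dvd_card
    rw [Fintype.card_units] at h3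
    have h4 : orderOf (a * b⁻¹) ∣ Nat.gcd 3 (Fintype.card F - 1) := Nat.dvd_gcd h2 h3
    rw [Nat.Coprime.gcd_eq_one h] at h4
    have h5 : a * b⁻¹ = 1 := orderOf_eq_one_iff.mp (Nat.eq_one_of_dvd_one h4 ▸ rfl)
    have : a = b := by
      have := mul_inv_eq_one.mp h5
      exact this
    have : x = y := by
      have := congrArg (Units.val) this
      simpa [a, b] using this
    exact this

section Inner
variable (p : ℕ) (F E : Type) [Field F] [Fintype F] [DecidableEq F] [Field E] [Fintype E]
  [DecidableEq E] [Algebra (ZMod p) E] [Algebra F E]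

lemma innerSum_eq (d : ℤ)
    (hd : d = -1 ∨ (d = 3 ∧ Nat.Coprime 3 (Fintype.card F - 1)))
    (v : F) (hv : v ≠ 0) :
    ∑ u ∈ Finset.univ.filter (fun u : F => u ≠ 0), Sd p F E d u v
      = ∑ u ∈ Finset.univ.filter (fun u : F => u ≠ 0), Sd p F E d 1 u := by
  rcases hd with rfl | ⟨rfl, hcop⟩
  · rw [Finset.sum_congr rfl (fun u hu => Sd_neg_one p F E u v
      (Finset.mem_filter.mp hu).2)]
    refine Finset.sum_nbij' (fun u => u * v) (fun w => w * v⁻¹) ?_ ?_ ?_ ?_ ?_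
    · intro a ha
      simp only [Finset.mem_filter, Finset.mem_univ, true_and] at ha ⊢
      exact mul_ne_zero ha hv
    · intro a ha
      simp only [Finset.mem_filter, Finset.mem_univ, true_and] at ha ⊢
      exact mul_ne_zero ha (inv_ne_zero hv)
    · intro a _; field_simp
    · intro a _; field_simp
    · intro a _; rfl
  · rw [Finset.sum_congr rfl (fun u hu => Sd_three p F E u v
      (Finset.mem_filter.mp hu).2)]
    set ec : F ≃ F := Equiv.ofBijective _ (cube_bijective F hcop) with hec
    set e : F ≃ F := (Equiv.inv F).trans (ec.trans (Equiv.mulLeft₀ v hv)) with he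
    have he_apply : ∀ u : F, e u = v * (u⁻¹) ^ 3 := by
      intro u
      simp [he, hec, Equiv.trans_apply, Equiv.inv_apply, Equiv.ofBijective_apply,
        Equiv.mulLeft₀_apply]
    refine Finset.sum_equiv e ?_ ?_
    · intro u
      simp only [Finset.mem_filter, Finset.mem_univ, true_and, he_apply]
      constructor
      · intro hu
        exact mul_ne_zero hv (pow_ne_zero _ (inv_ne_zero hu))
      · intro h hu0
        subst hu0
        simp at h
    · intro u hu
      rw [he_apply]
end Inner


/-- Let `p` be a prime, `q = p^r`, `m ≥ 1`, `β ∈ 𝔽_{q^m}`, and suppose `d = -1`, or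
`d = 3` with `p = 2` and `r` odd.  Then
`Σ_{v ∈ 𝔽_q^*} e(vβ) Σ_{u ∈ 𝔽_q^*} S_d^{(m)}(u,v) = S · Σ_{u ∈ 𝔽_q^*} S_d^{(m)}(1,u)`,
where `S = q - 1` if `Tr_{𝔽_{q^m}/𝔽_q}(β) = 0` and `S = -1` otherwise.  In particular,
if `Tr(β₁) = 0` then `N_{m,d}(β₁) = N_{m,d}(0)`, and if `Tr(β₂) ≠ 0` then
`N_{m,d}(β₂) - (q^m+1) = -(N_{m,d}(0) - (q^m+1))/(q-1)`, in terms of the double sums. -/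
theorem dblSum_eq_S_mul
    (p r m : ℕ) (hp : p.Prime) (hr : 0 < r) (hm : 0 < m)
    (d : ℤ) (hd : d = -1 ∨ (d = 3 ∧ p = 2 ∧ Odd r))
    (F E : Type) [Field F] [Fintype F] [DecidableEq F] [Field E] [Fintype E] [DecidableEq E]
    [Algebra (ZMod p) E] [Algebra F E]
    (hF : Fintype.card F = p ^ r) (hE : Fintype.card E = (p ^ r) ^ m)
    (β β₁ β₂ : E) (hβ₁ : Algebra.trace F E β₁ = 0) (hβ₂ : Algebra.trace F E β₂ ≠ 0) :
    dblSum p F E d β =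
      (if Algebra.trace F E β = 0 then ((p : ℂ) ^ r - 1) else -1) *
        ∑ u ∈ Finset.univ.filter (fun u : F => u ≠ 0), Sd p F E d 1 u ∧
    dblSum p F E d β₁ = dblSum p F E d 0 ∧
    dblSum p F E d β₂ = -(dblSum p F E d 0) / ((p : ℂ) ^ r - 1) := by
  haveI : Fact p.Prime := ⟨hp⟩
  haveI : NeZero p := ⟨hp.ne_zero⟩
  -- the characteristic of `F` is `p`
  have hcharF : ringChar F = p := by
    obtain ⟨n, hn, hcard⟩ := FiniteField.card F (ringChar F)
    have hdvd : ringChar F ∣ p ^ r := by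
      rw [← hF, hcard]
      exact dvd_pow_self _ (by positivity)
    exact (Nat.prime_dvd_prime_iff_eq hn hp).mp (hn.dvd_of_dvd_pow hdvd)
  haveI : CharP F p := hcharF ▸ ringChar.charP F
  letI : Algebra (ZMod p) F := ZMod.algebra F p
  haveI : IsScalarTower (ZMod p) F E :=
    IsScalarTower.of_algebraMap_eq' (Subsingleton.elim _ _)
  -- coprimality in the cubic case
  have hcop : d = -1 ∨ (d = 3 ∧ Nat.Coprime 3 (Fintype.card F - 1)) := by
    rcases hd with h | ⟨h3, hp2, hodd⟩
    · exact Or.inl h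
    · refine Or.inr ⟨h3, ?_⟩
      subst hp2
      rw [hF]
      have h2 : 2 ^ r % 3 = 2 := by
        obtain ⟨k, rfl⟩ := hodd
        rw [pow_succ, pow_mul, Nat.mul_mod, Nat.pow_mod]
        norm_num
      have hge : 1 ≤ 2 ^ r := Nat.one_le_two_pow
      rw [Nat.Prime.coprime_iff_not_dvd (by norm_num)]
      omega
  have hinner := innerSum_eq p F E d hcop
  set T : ℂ := ∑ u ∈ Finset.univ.filter (fun u : F => u ≠ 0), Sd p F E d 1 u with hT
  have hcardC : ((Fintype.card F : ℕ) : ℂ) = (p : ℂ) ^ r := by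
    rw [hF]; push_cast; ring
  -- the key computation
  have key : ∀ γ : E, dblSum p F E d γ
      = ((if Algebra.trace F E γ = 0 then ((Fintype.card F : ℕ) : ℂ) else 0) - 1) * T := by
    intro γ
    unfold dblSum
    rw [Finset.sum_congr rfl (fun v hv => by
      rw [hinner v (Finset.mem_filter.mp hv).2])]
    rw [← Finset.sum_mul]
    congr 1
    have hfe : Finset.univ.filter (fun v : F => v ≠ 0) = Finset.univ.erase 0 := by
      ext v; simp [Finset.mem_erase]
    have h0 : addChar p E (algebraMap F E (0 : F) * γ) = 1 := by
      rw [map_zero, zero_mul, ← eAC_apply]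
      exact (eAC p E).map_zero_eq_one
    rw [hfe, Finset.sum_erase_eq_sub (Finset.mem_univ 0), sum_psiBeta p F E γ, h0]
    split_ifs <;> rfl
  have hne : ((p : ℂ) ^ r - 1) ≠ 0 := by
    intro h
    have h1 : ((p ^ r : ℕ) : ℂ) = 1 := by
      push_cast
      linear_combination h
    have h2 : p ^ r = 1 := Nat.cast_eq_one.mp h1
    have := Nat.one_lt_pow hr.ne' hp.one_lt
    omega
  refine ⟨?_, ?_, ?_⟩
  · rw [key β]
    by_cases h : Algebra.trace F E β = 0
    · rw [if_pos h, if_pos h, hcardC]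
    · rw [if_neg h, if_neg h]
      ring
  · rw [key β₁, key 0, hβ₁, map_zero]
  · rw [key β₂, key 0, if_neg hβ₂, if_pos (map_zero _), hcardC]
    field_simp
    ring
end

section
/- Let p ∈ {2, 3}, q = p^r, and suppose either d = −1 (with the convention 0^{−1} = 0), or d = 3 and p = 2. Write m = p^k·s with p ∤ s. Then G_{0,d}(m) = Σ_{t | s} μ(s/t) · H_{0,d}(p^k·t) − Σ_{i=0}^{k−1} I(p^i·s), where μ is the Möbius function and I(n) = Σ_{t | n} μ(t)·q^{n/t}. -/
open Finset Polynomial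

section Aux

/-- Divisors of `p^k * s` with `p ∤ s` decompose as `p^a * u` with `a ≤ k`, `u ∣ s`. -/
lemma dvd_pow_mul_decomp {p s : ℕ} (hp : p.Prime) (hps : ¬ p ∣ s) :
    ∀ (k : ℕ) (e : ℕ), e ∣ p ^ k * s → ∃ a u, a ≤ k ∧ u ∣ s ∧ e = p ^ a * u := by
  intro k
  induction k with
  | zero =>
    intro e he
    exact ⟨0, e, le_refl 0, by simpa using he, by simp⟩
  | succ k ih =>
    intro e he
    by_cases hpe : p ∣ e
    · obtain ⟨e', rfl⟩ := hpe
      have h1 : e' ∣ p ^ k * s := by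
        have hmul : p * e' ∣ p * (p ^ k * s) := by
          calc p * e' ∣ p ^ (k+1) * s := he
          _ = p * (p ^ k * s) := by ring
        exact (mul_dvd_mul_iff_left hp.pos.ne').mp hmul
      obtain ⟨a, u, ha, hu, rfl⟩ := ih e' h1
      exact ⟨a + 1, u, by omega, hu, by ring⟩
    · have hc : e.Coprime (p ^ (k+1)) :=
        (Nat.Coprime.pow_right _ (((Nat.Prime.coprime_iff_not_dvd hp).mpr hpe).symm))
      refine ⟨0, e, Nat.zero_le _, ?_, by simp⟩
      exact hc.dvd_of_dvd_mul_left he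

lemma charP_of_card {p N : ℕ} (K : Type) [Field K] [Fintype K] (hp : p.Prime)
    (hN : 0 < N) (hK : Fintype.card K = p ^ N) : CharP K p := by
  obtain ⟨c, hc⟩ := CharP.exists K
  haveI := hc
  have hcp : c ∣ p ^ N := by
    rw [← CharP.cast_eq_zero_iff K c, ← hK, Nat.cast_card_eq_zero]
  have hcprime : c.Prime := CharP.char_is_prime K c
  have hce : c = p := (Nat.prime_dvd_prime_iff_eq hcprime hp).mp (hcprime.dvd_of_dvd_pow hcp)
  exact hce ▸ hc

lemma pow_p_pow_inj {p : ℕ} {K : Type} [Field K] (hp : p.Prime) [CharP K p] (M : ℕ)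
    {x y : K} (h : x ^ p ^ M = y ^ p ^ M) : x = y := by
  haveI := Fact.mk hp
  have h1 : (x - y) ^ p ^ M = 0 := by rw [sub_pow_char_pow, h, sub_self]
  have h2 : x - y = 0 := pow_eq_zero_iff (pow_ne_zero M hp.pos.ne' : p ^ M ≠ 0) |>.mp h1
  exact sub_eq_zero.mp h2

lemma pow_pow_stable {K : Type} [Monoid K] {z : K} {a : ℕ} (h : z ^ a = z) :
    ∀ c, z ^ a ^ c = z
  | 0 => by simp
  | c + 1 => by rw [pow_succ, pow_mul, pow_pow_stable h c, h]

/-- The fixed points of a power of Frobenius form a subfield. -/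
def fixSubfield (K : Type) [Field K] (p : ℕ) (hp : Fact p.Prime) (hc : CharP K p) (M : ℕ) :
    Subfield K where
  carrier := {x | x ^ p ^ M = x}
  mul_mem' := by
    intro a b ha hb
    simp only [Set.mem_setOf_eq, mul_pow] at *
    rw [ha, hb]
  one_mem' := by simp
  add_mem' := by
    intro a b ha hb
    simp only [Set.mem_setOf_eq] at *
    rw [add_pow_char_pow, ha, hb]
  zero_mem' := by
    simp only [Set.mem_setOf_eq]
    exact zero_pow (pow_ne_zero M hp.out.pos.ne')
  neg_mem' := by
    intro a ha
    simp only [Set.mem_setOf_eq] at *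
    rw [neg_pow, neg_one_pow_char_pow, ha, neg_one_mul]
  inv_mem' := by
    intro a ha
    simp only [Set.mem_setOf_eq] at *
    rw [inv_pow, ha]

lemma card_pow_eq_le {K : Type} [Field K] [Fintype K] [DecidableEq K] {N : ℕ} (hN : 1 < N) :
    (univ.filter fun x : K => x ^ N = x).card ≤ N := by
  have hne : (X ^ N - X : K[X]) ≠ 0 := FiniteField.X_pow_card_sub_X_ne_zero K hN
  calc (univ.filter fun x : K => x ^ N = x).card
      ≤ (X ^ N - X : K[X]).roots.toFinset.card := by
        apply Finset.card_le_card
        intro x hx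
        simp only [mem_filter, mem_univ, true_and] at hx
        simp only [Multiset.mem_toFinset, mem_roots hne, IsRoot.def, eval_sub, eval_pow, eval_X]
        rw [hx, sub_self]
    _ ≤ Multiset.card (X ^ N - X : K[X]).roots := Multiset.toFinset_card_le _
    _ ≤ (X ^ N - X : K[X]).natDegree := Polynomial.card_roots' _
    _ = N := FiniteField.X_pow_card_sub_X_natDegree_eq K hN

end Aux

section Deg

variable {p r : ℕ} {F E : Type} [Field F] [Fintype F] [Field E] [Fintype E] [Algebra F E]

/-- Key Galois-theoretic fact: `z^(q^j) = z` iff the degree of `z` over `F` divides `j`. -/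
lemma minpoly_natDegree_dvd_iff (hp : p.Prime) (hr : 0 < r) (hF : Fintype.card F = p ^ r)
    (z : E) (j : ℕ) : z ^ (p ^ r) ^ j = z ↔ (minpoly F z).natDegree ∣ j := by
  classical
  haveI : Fact p.Prime := ⟨hp⟩
  haveI hcF : CharP F p := charP_of_card F hp hr hF
  haveI hcE : CharP E p := charP_of_injective_algebraMap (algebraMap F E).injective p
  haveI : Module.Finite F E := Module.finite_iff_finite.mpr inferInstance
  have hint : IsIntegral F z := IsIntegral.of_finite F z
  set n := (minpoly F z).natDegree with hn
  have hn0 : 0 < n := minpoly.natDegree_pos hint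
  have hq1 : 1 < p ^ r := Nat.one_lt_pow hr.ne' hp.one_lt
  letI : Fintype (IntermediateField.adjoin F {z}) := Fintype.ofFinite _
  have hcard : Fintype.card (IntermediateField.adjoin F {z}) = (p ^ r) ^ n := by
    rw [Module.card_eq_pow_finrank (K := F), hF, IntermediateField.adjoin.finrank hint]
  have hzn : z ^ (p ^ r) ^ n = z := by
    have h1 : (⟨z, IntermediateField.mem_adjoin_simple_self F z⟩ :
        IntermediateField.adjoin F {z}) ^ Fintype.card (IntermediateField.adjoin F {z}) =
        ⟨z, IntermediateField.mem_adjoin_simple_self F z⟩ := FiniteField.pow_card _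
    rw [hcard] at h1
    have h2 := congrArg Subtype.val h1
    simpa using h2
  constructor
  · intro h
    have hper : z ^ (p ^ r) ^ (j % n) = z := by
      have hmul : z ^ (p ^ r) ^ (n * (j / n)) = z := by
        have h3 := pow_pow_stable hzn (j / n)
        rwa [← pow_mul] at h3
      have hsplit : z ^ (p ^ r) ^ j = (z ^ (p ^ r) ^ (j % n)) ^ (p ^ r) ^ (n * (j / n)) := by
        rw [← pow_mul z, ← pow_add, Nat.mod_add_div]
      have hpm : (p ^ r) ^ (n * (j / n)) = p ^ (r * (n * (j / n))) := (pow_mul p r _).symm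
      have h2 : (z ^ (p ^ r) ^ (j % n)) ^ p ^ (r * (n * (j / n)))
          = z ^ p ^ (r * (n * (j / n))) := by
        rw [← hpm, ← hsplit, h, hmul]
      exact pow_p_pow_inj hp _ h2
    by_contra hnd
    have hmod0 : j % n ≠ 0 := fun h0 => hnd (Nat.dvd_of_mod_eq_zero h0)
    have hmodlt : j % n < n := Nat.mod_lt _ hn0
    set e := j % n with he
    letI sf := fixSubfield E p ⟨hp⟩ hcE (r * e)
    have halg : ∀ x : F, algebraMap F E x ∈ sf := by
      intro x
      show (algebraMap F E x) ^ p ^ (r * e) = algebraMap F E x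
      have hx : (algebraMap F E x) ^ p ^ r = algebraMap F E x := by
        rw [← map_pow, ← hF, FiniteField.pow_card]
      calc (algebraMap F E x) ^ p ^ (r * e) = (algebraMap F E x) ^ (p ^ r) ^ e := by
            rw [← pow_mul]
        _ = algebraMap F E x := pow_pow_stable hx e
    letI itf := Subfield.toIntermediateField sf halg
    have hz_mem : z ∈ itf := by
      show z ^ p ^ (r * e) = z
      rw [pow_mul]
      exact hper
    have hle : IntermediateField.adjoin F {z} ≤ itf := by
      rw [IntermediateField.adjoin_le_iff]
      intro w hw
      rcases hw with rfl
      exact hz_mem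
    have hle2 : Fintype.card (IntermediateField.adjoin F {z}) ≤
        (univ.filter fun x : E => x ^ (p ^ r) ^ e = x).card := by
      rw [← Fintype.card_subtype]
      refine Fintype.card_le_of_injective
        (fun w => ⟨w.1, ?_⟩) (by intro a b hab; exact Subtype.ext (Subtype.mk_eq_mk.mp hab))
      have hw := hle w.2
      have : w.1 ^ p ^ (r * e) = w.1 := hw
      rwa [pow_mul] at this
    have hfin : (p ^ r) ^ n ≤ (p ^ r) ^ e := by
      rw [← hcard]
      exact hle2.trans (card_pow_eq_le (Nat.one_lt_pow hmod0 hq1))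
    exact absurd hfin (not_le.mpr (Nat.pow_lt_pow_right hq1 hmodlt))
  · rintro ⟨c, rfl⟩
    rw [pow_mul]
    exact pow_pow_stable hzn c

end Deg

section CardFix

/-- The number of solutions of `x^(q^n) = x` in a field with `q^m` elements, `n ∣ m`. -/
lemma card_fix {p r : ℕ} {E : Type} [Field E] [Fintype E] [DecidableEq E] (hp : p.Prime)
    (hr : 0 < r) {m : ℕ} (hE : Fintype.card E = (p ^ r) ^ m) {n : ℕ} (hn : 0 < n) (hnm : n ∣ m) :
    (univ.filter fun x : E => x ^ (p ^ r) ^ n = x).card = (p ^ r) ^ n := by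
  have hq1 : 1 < p ^ r := Nat.one_lt_pow hr.ne' hp.one_lt
  have hqn : 1 < (p ^ r) ^ n := Nat.one_lt_pow hn.ne' hq1
  have hm0 : 0 < m := by
    rcases Nat.eq_zero_or_pos m with rfl | h
    · have h2 : 1 < Fintype.card E := Fintype.one_lt_card
      simp only [pow_zero] at hE
      omega
    · exact h
  have hqm : 1 < (p ^ r) ^ m := Nat.one_lt_pow hm0.ne' hq1
  have hcardU : Fintype.card Eˣ = (p ^ r) ^ m - 1 := by rw [Fintype.card_units, hE]
  set D := (p ^ r) ^ n - 1 with hD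
  have hD0 : 0 < D := by omega
  have hdvd : D ∣ (p ^ r) ^ m - 1 := by
    obtain ⟨c, rfl⟩ := hnm
    have h1 : (p ^ r) ^ (n * c) = ((p ^ r) ^ n) ^ c := pow_mul _ _ _
    rw [h1]
    simpa using Nat.sub_dvd_pow_sub_pow ((p ^ r) ^ n) 1 c
  have key : (univ.filter fun u : Eˣ => u ^ D = 1).card = D := by
    refine le_antisymm (IsCyclic.card_pow_eq_one_le hD0) ?_
    obtain ⟨g, hg⟩ := IsCyclic.exists_generator (α := Eˣ)
    have horder : orderOf g = (p ^ r) ^ m - 1 := by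
      rw [orderOf_eq_card_of_forall_mem_zpowers hg, Nat.card_eq_fintype_card, hcardU]
    obtain ⟨c, hc⟩ := hdvd
    have hc0 : 0 < c := by
      rcases Nat.eq_zero_or_pos c with rfl | h
      · rw [mul_zero] at hc; omega
      · exact h
    have hoh : orderOf (g ^ c) = D := by
      rw [orderOf_pow, horder, hc, Nat.gcd_eq_right ⟨D, mul_comm D c⟩, Nat.mul_div_cancel _ hc0]
    have hsub : ∀ i ∈ range D, (g ^ c) ^ i ∈ univ.filter fun u : Eˣ => u ^ D = 1 := by
      intro i _
      simp only [mem_filter, mem_univ, true_and]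
      rw [← pow_mul, mul_comm, pow_mul, ← hoh, pow_orderOf_eq_one, one_pow]
    have hinj : Set.InjOn (fun i => (g ^ c) ^ i) (range D) := by
      intro a ha b hb hab
      refine pow_injOn_Iio_orderOf ?_ ?_ hab
      · rw [Set.mem_Iio, hoh]; exact mem_range.mp (by simpa using ha)
      · rw [Set.mem_Iio, hoh]; exact mem_range.mp (by simpa using hb)
    have := Finset.card_le_card_of_injOn (fun i => (g ^ c) ^ i) hsub hinj
    simpa using this
  have hset : (univ.filter fun x : E => x ^ (p ^ r) ^ n = x) =
      insert (0 : E) ((univ.filter fun u : Eˣ => u ^ D = 1).image (Units.val)) := by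
    have hDsucc : D + 1 = (p ^ r) ^ n := by omega
    ext x
    simp only [mem_filter, mem_univ, true_and, mem_insert, mem_image]
    constructor
    · intro hx
      by_cases hx0 : x = 0
      · exact Or.inl hx0
      · refine Or.inr ⟨Units.mk0 x hx0, ⟨?_, rfl⟩⟩
        have hxD : x ^ D * x = x := by rw [← pow_succ, hDsucc, hx]
        have hxD1 : x ^ D = 1 := by
          have := mul_right_cancel₀ hx0 (hxD.trans (one_mul x).symm)
          exact this
        ext
        rw [Units.val_pow_eq_pow_val, Units.val_mk0, hxD1, Units.val_one]
    · rintro (rfl | ⟨u, hu, rfl⟩)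
      · exact zero_pow (by positivity)
      · have : (u : E) ^ D = 1 := by
          rw [← Units.val_pow_eq_pow_val, hu, Units.val_one]
        rw [← hDsucc, pow_succ, this, one_mul]
  rw [hset, Finset.card_insert_of_notMem, Finset.card_image_of_injective _ Units.val_injective, key]
  · omega
  · intro h0
    simp only [mem_image, mem_filter] at h0
    obtain ⟨u, _, hu⟩ := h0
    exact u.ne_zero hu

end CardFix

section Trace

lemma trace_block {E : Type} [Field E] (q : ℕ) {z : E} {e : ℕ} (hz : z ^ q ^ e = z) (c : ℕ) :
    ∑ i ∈ range (c * e), z ^ q ^ i = (c : E) * ∑ i ∈ range e, z ^ q ^ i := by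
  induction c with
  | zero => simp
  | succ c ih =>
    have h1 : (c + 1) * e = c * e + e := by ring
    rw [h1, Finset.sum_range_add, ih]
    have hzc : z ^ q ^ (c * e) = z := by
      rw [mul_comm c e, pow_mul]
      exact pow_pow_stable hz c
    have hterm : ∀ i, z ^ q ^ (c * e + i) = z ^ q ^ i := by
      intro i
      rw [pow_add, pow_mul z, hzc]
    rw [Finset.sum_congr rfl (fun i _ => hterm i)]
    push_cast
    ring

lemma pow_d_stable {E : Type} [Field E] {d : ℤ} (hd : d = -1 ∨ d = 3) {z : E} {N : ℕ}
    (hz : z ^ N = z) : (z ^ d) ^ N = z ^ d := by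
  rcases hd with rfl | rfl
  · rw [zpow_neg, zpow_one, inv_pow, hz]
  · rw [show (3 : ℤ) = ((3 : ℕ) : ℤ) by norm_num, zpow_natCast, ← pow_mul, mul_comm, pow_mul, hz]

end Trace

section Step1

variable {p r k s : ℕ} {F E : Type} [Field F] [Fintype F] [Field E] [Fintype E] [Algebra F E]

/-- Partition of the solutions in `𝔽_{q^{p^k t}}` according to degree. -/
lemma step_one [DecidableEq E] (hp : p.Prime) (hr : 0 < r) (hs : 0 < s) (hps : ¬ p ∣ s)
    {d : ℤ} (hd : d = -1 ∨ d = 3)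
    (hF : Fintype.card F = p ^ r) (hE : Fintype.card E = (p ^ r) ^ (p ^ k * s))
    {t : ℕ} (ht : t ∣ s) (ht0 : 0 < t) :
    (univ.filter fun z : E => z ^ (p ^ r) ^ (p ^ k * t) = z ∧
        (∑ i ∈ range (p ^ k * t), z ^ (p ^ r) ^ i) = 0 ∧
        (∑ i ∈ range (p ^ k * t), (z ^ d) ^ (p ^ r) ^ i) = 0).card
    = (∑ u ∈ t.divisors, (univ.filter fun z : E => (minpoly F z).natDegree = p ^ k * u ∧
        (∑ i ∈ range (p ^ k * u), z ^ (p ^ r) ^ i) = 0 ∧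
        (∑ i ∈ range (p ^ k * u), (z ^ d) ^ (p ^ r) ^ i) = 0).card)
      + (if k = 0 then 0 else (p ^ r) ^ (p ^ (k - 1) * t)) := by
  haveI : Fact p.Prime := ⟨hp⟩
  haveI hcE : CharP E p := charP_of_card E hp
    (N := r * (p ^ k * s)) (Nat.mul_pos hr (Nat.mul_pos (pow_pos hp.pos k) hs))
    (by rw [hE, pow_mul p r])
  have hpt : ¬ p ∣ t := fun h => hps (h.trans ht)
  have hiff : ∀ (z : E) (j : ℕ), z ^ (p ^ r) ^ j = z ↔ (minpoly F z).natDegree ∣ j :=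
    fun z j => minpoly_natDegree_dvd_iff hp hr hF z j
  set Gset : ℕ → Finset E := fun u => univ.filter fun z : E =>
      (minpoly F z).natDegree = p ^ k * u ∧
      (∑ i ∈ range (p ^ k * u), z ^ (p ^ r) ^ i) = 0 ∧
      (∑ i ∈ range (p ^ k * u), (z ^ d) ^ (p ^ r) ^ i) = 0 with hGset
  set A : Finset E := if k = 0 then ∅ else
      univ.filter (fun z : E => z ^ (p ^ r) ^ (p ^ (k - 1) * t) = z) with hA
  -- membership in a Gset implies membership in the big set
  have hGsub : ∀ u, u ∣ t → ∀ z ∈ Gset u,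
      z ^ (p ^ r) ^ (p ^ k * t) = z ∧
      (∑ i ∈ range (p ^ k * t), z ^ (p ^ r) ^ i) = 0 ∧
      (∑ i ∈ range (p ^ k * t), (z ^ d) ^ (p ^ r) ^ i) = 0 := by
    intro u hu z hz
    simp only [hGset, mem_filter, mem_univ, true_and] at hz
    obtain ⟨hdeg, hT1, hT2⟩ := hz
    have hu0 : 0 < u := Nat.pos_of_dvd_of_pos hu ht0
    have hze : z ^ (p ^ r) ^ (p ^ k * u) = z := (hiff z _).mpr (hdeg ▸ dvd_rfl)
    have hze' : (z ^ d) ^ (p ^ r) ^ (p ^ k * u) = z ^ d := pow_d_stable hd hze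
    have hct : t / u * u = t := Nat.div_mul_cancel hu
    have hc : p ^ k * t = (t / u) * (p ^ k * u) := by
      conv_lhs => rw [← hct]
      ring
    refine ⟨?_, ?_, ?_⟩
    · refine (hiff z _).mpr ?_
      rw [hdeg, hc]
      exact Dvd.intro_left _ rfl
    · rw [hc, trace_block _ hze, hT1, mul_zero]
    · rw [hc, trace_block _ hze', hT2, mul_zero]
  -- the set equality
  have hmain : (univ.filter fun z : E => z ^ (p ^ r) ^ (p ^ k * t) = z ∧
      (∑ i ∈ range (p ^ k * t), z ^ (p ^ r) ^ i) = 0 ∧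
      (∑ i ∈ range (p ^ k * t), (z ^ d) ^ (p ^ r) ^ i) = 0)
      = A ∪ t.divisors.biUnion Gset := by
    ext z
    simp only [mem_filter, mem_univ, true_and, mem_union, mem_biUnion]
    constructor
    · rintro ⟨hz, hT1, hT2⟩
      have he : (minpoly F z).natDegree ∣ p ^ k * t := (hiff z _).mp hz
      obtain ⟨a, u, hak, hu, heq⟩ := dvd_pow_mul_decomp hp hpt k _ he
      have hu0 : 0 < u := Nat.pos_of_dvd_of_pos hu ht0
      by_cases hlt : a < k
      · left
        have hk0 : k ≠ 0 := by omega
        rw [hA, if_neg hk0, mem_filter]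
        refine ⟨mem_univ z, (hiff z _).mpr ?_⟩
        rw [heq]
        exact mul_dvd_mul (pow_dvd_pow p (by omega)) hu
      · right
        have hak' : a = k := by omega
        subst hak'
        refine ⟨u, Nat.mem_divisors.mpr ⟨hu, ht0.ne'⟩, ?_⟩
        simp only [hGset, mem_filter, mem_univ, true_and]
        have hze : z ^ (p ^ r) ^ (p ^ a * u) = z := (hiff z _).mpr (heq ▸ dvd_rfl)
        have hze' : (z ^ d) ^ (p ^ r) ^ (p ^ a * u) = z ^ d := pow_d_stable hd hze
        have hct : t / u * u = t := Nat.div_mul_cancel hu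
        have hc : p ^ a * t = (t / u) * (p ^ a * u) := by
          conv_lhs => rw [← hct]
          ring
        have hcne : ((t / u : ℕ) : E) ≠ 0 := by
          rw [Ne, CharP.cast_eq_zero_iff E p]
          intro hpc
          exact hps (((hpc.trans (Nat.div_dvd_of_dvd hu)).trans ht))
        rw [hc, trace_block _ hze] at hT1
        rw [hc, trace_block _ hze'] at hT2
        exact ⟨heq, by
          rcases mul_eq_zero.mp hT1 with h | h
          · exact absurd h hcne
          · exact h, by
          rcases mul_eq_zero.mp hT2 with h | h
          · exact absurd h hcne
          · exact h⟩
    · rintro (hzA | ⟨u, hu, hzG⟩)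
      · by_cases hk0 : k = 0
        · rw [hA, if_pos hk0] at hzA
          exact absurd hzA (notMem_empty z)
        · rw [hA, if_neg hk0, mem_filter] at hzA
          obtain ⟨-, hz'⟩ := hzA
          have hsucc : p ^ k * t = p * (p ^ (k - 1) * t) := by
            rw [← mul_assoc, ← pow_succ']
            congr 2
            omega
          have hz : z ^ (p ^ r) ^ (p ^ k * t) = z := by
            refine (hiff z _).mpr ?_
            have h1 : (minpoly F z).natDegree ∣ p ^ (k - 1) * t := (hiff z _).mp hz'
            rw [hsucc]
            exact h1.mul_left p
          have hz'' : (z ^ d) ^ (p ^ r) ^ (p ^ (k - 1) * t) = z ^ d := pow_d_stable hd hz'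
          have hp0 : ((p : ℕ) : E) = 0 := CharP.cast_eq_zero E p
          refine ⟨hz, ?_, ?_⟩
          · rw [hsucc, trace_block _ hz', hp0, zero_mul]
          · rw [hsucc, trace_block _ hz'', hp0, zero_mul]
      · exact hGsub u (Nat.mem_divisors.mp hu).1 z hzG
  rw [hmain]
  -- cardinalities
  have hdisj : Disjoint A (t.divisors.biUnion Gset) := by
    rw [Finset.disjoint_left]
    intro z hzA hzB
    by_cases hk0 : k = 0
    · rw [hA, if_pos hk0] at hzA
      exact absurd hzA (notMem_empty z)
    · rw [hA, if_neg hk0, mem_filter] at hzA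
      obtain ⟨-, hz'⟩ := hzA
      obtain ⟨u, hu, hzG⟩ := mem_biUnion.mp hzB
      simp only [hGset, mem_filter, mem_univ, true_and] at hzG
      have hdvd : (minpoly F z).natDegree ∣ p ^ (k - 1) * t := (hiff z _).mp hz'
      rw [hzG.1] at hdvd
      have hpk : p ^ k ∣ p ^ (k - 1) * t := (dvd_mul_right _ u).trans hdvd
      have : p ^ (k - 1) * p ∣ p ^ (k - 1) * t := by
        rw [← pow_succ]
        have : (k - 1) + 1 = k := by omega
        rw [this]
        exact hpk
      exact hpt ((mul_dvd_mul_iff_left (pow_pos hp.pos (k - 1)).ne').mp this)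
  rw [Finset.card_union_of_disjoint hdisj, Finset.card_biUnion, add_comm]
  · congr 1
    by_cases hk0 : k = 0
    · rw [hA, if_pos hk0, if_pos hk0, Finset.card_empty]
    · rw [hA, if_neg hk0, if_neg hk0]
      refine card_fix hp hr hE ?_ ?_
      · exact Nat.mul_pos (pow_pos hp.pos _) ht0
      · exact mul_dvd_mul (pow_dvd_pow p (by omega)) ht
  · intro u hu v hv huv
    rw [Function.onFun, Finset.disjoint_left]
    intro z hzu hzv
    simp only [hGset, mem_filter, mem_univ, true_and] at hzu hzv
    exact huv (Nat.eq_of_mul_eq_mul_left (pow_pos hp.pos k) (hzu.1 ▸ hzv.1))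

end Step1

section Moebius

open ArithmeticFunction

/-- Möbius inversion in the form we need. -/
lemma moebius_double_sum (G : ℕ → ℤ) {s : ℕ} (hs : 0 < s) :
    ∑ t ∈ s.divisors, (moebius (s / t) : ℤ) * (∑ u ∈ t.divisors, G u) = G s := by
  have h := (ArithmeticFunction.sum_eq_iff_sum_mul_moebius_eq
      (f := G) (g := fun n => ∑ u ∈ n.divisors, G u)).mp (fun n _ => rfl) s hs
  calc ∑ t ∈ s.divisors, (moebius (s / t) : ℤ) * (∑ u ∈ t.divisors, G u)
      = ∑ x ∈ s.divisorsAntidiagonal, (moebius x.1 : ℤ) * (∑ u ∈ x.2.divisors, G u) :=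
        (Nat.sum_divisorsAntidiagonal' (f := fun a b => (moebius a : ℤ) * ∑ u ∈ b.divisors, G u)).symm
    _ = G s := h

/-- Splitting of the `I`-sum at level `p^i s` into two sums over divisors of `s`. -/
lemma I_split {p s : ℕ} (hp : p.Prime) (hs : 0 < s) (hps : ¬ p ∣ s) (Q : ℤ) {i : ℕ} (hi : 0 < i) :
    ∑ x ∈ (p ^ i * s).divisorsAntidiagonal, (moebius x.1 : ℤ) * Q ^ x.2
    = ∑ x ∈ s.divisorsAntidiagonal,
        (moebius x.1 : ℤ) * (Q ^ (p ^ i * x.2) - Q ^ (p ^ (i - 1) * x.2)) := by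
  have hp0 : 0 < p := hp.pos
  have hn0 : p ^ i * s ≠ 0 := (Nat.mul_pos (pow_pos hp0 i) hs).ne'
  have hpi : p * p ^ (i - 1) = p ^ i := by
    rw [← pow_succ']
    congr 1
    omega
  set e₁ : ℕ × ℕ → ℕ × ℕ := fun x => (x.1, p ^ i * x.2) with he₁
  set e₂ : ℕ × ℕ → ℕ × ℕ := fun x => (p * x.1, p ^ (i - 1) * x.2) with he₂
  have hmem : ∀ x ∈ s.divisorsAntidiagonal, x.1 * x.2 = s := by
    intro x hx
    exact (Nat.mem_divisorsAntidiagonal.mp hx).1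
  have hpx1 : ∀ x ∈ s.divisorsAntidiagonal, ¬ p ∣ x.1 := by
    intro x hx hdvd
    exact hps (hdvd.trans (Dvd.intro _ (hmem x hx)))
  have hsub1 : s.divisorsAntidiagonal.image e₁ ⊆ (p ^ i * s).divisorsAntidiagonal := by
    intro y hy
    obtain ⟨x, hx, rfl⟩ := mem_image.mp hy
    rw [Nat.mem_divisorsAntidiagonal]
    refine ⟨?_, hn0⟩
    show x.1 * (p ^ i * x.2) = p ^ i * s
    rw [← hmem x hx]; ring
  have hsub2 : s.divisorsAntidiagonal.image e₂ ⊆ (p ^ i * s).divisorsAntidiagonal := by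
    intro y hy
    obtain ⟨x, hx, rfl⟩ := mem_image.mp hy
    rw [Nat.mem_divisorsAntidiagonal]
    refine ⟨?_, hn0⟩
    show p * x.1 * (p ^ (i - 1) * x.2) = p ^ i * s
    rw [← hmem x hx]
    calc p * x.1 * (p ^ (i - 1) * x.2) = (p * p ^ (i - 1)) * (x.1 * x.2) := by ring
      _ = p ^ i * (x.1 * x.2) := by rw [hpi]
  have hdisj : Disjoint (s.divisorsAntidiagonal.image e₁) (s.divisorsAntidiagonal.image e₂) := by
    rw [Finset.disjoint_left]
    intro y hy1 hy2
    obtain ⟨x, hx, rfl⟩ := mem_image.mp hy1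
    obtain ⟨x', hx', hxx⟩ := mem_image.mp hy2
    apply hpx1 x hx
    have h1 : p * x'.1 = x.1 := by
      have := (Prod.ext_iff.mp hxx).1
      simpa [he₁, he₂] using this
    exact h1 ▸ Dvd.intro _ rfl
  have hU : s.divisorsAntidiagonal.image e₁ ∪ s.divisorsAntidiagonal.image e₂ ⊆
      (p ^ i * s).divisorsAntidiagonal := Finset.union_subset hsub1 hsub2
  have hinj1 : Set.InjOn e₁ s.divisorsAntidiagonal := by
    intro a ha b hb hab
    simp only [he₁, Prod.mk.injEq] at hab
    exact Prod.ext hab.1 (Nat.eq_of_mul_eq_mul_left (pow_pos hp0 i) hab.2)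
  have hinj2 : Set.InjOn e₂ s.divisorsAntidiagonal := by
    intro a ha b hb hab
    simp only [he₂, Prod.mk.injEq] at hab
    exact Prod.ext (Nat.eq_of_mul_eq_mul_left hp0 hab.1)
      (Nat.eq_of_mul_eq_mul_left (pow_pos hp0 (i - 1)) hab.2)
  have hmu : ∀ x ∈ s.divisorsAntidiagonal, (moebius (p * x.1) : ℤ) = - moebius x.1 := by
    intro x hx
    rw [ArithmeticFunction.isMultiplicative_moebius.map_mul_of_coprime
      ((Nat.Prime.coprime_iff_not_dvd hp).mpr (hpx1 x hx)),
      ArithmeticFunction.moebius_apply_prime hp]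
    ring
  have h1 : ∑ y ∈ s.divisorsAntidiagonal.image e₁, (moebius y.1 : ℤ) * Q ^ y.2
      = ∑ x ∈ s.divisorsAntidiagonal, (moebius x.1 : ℤ) * Q ^ (p ^ i * x.2) :=
    Finset.sum_image hinj1
  have h2 : ∑ y ∈ s.divisorsAntidiagonal.image e₂, (moebius y.1 : ℤ) * Q ^ y.2
      = ∑ x ∈ s.divisorsAntidiagonal, -(moebius x.1 : ℤ) * Q ^ (p ^ (i - 1) * x.2) := by
    rw [Finset.sum_image hinj2]
    exact Finset.sum_congr rfl (fun x hx => by rw [show (e₂ x).1 = p * x.1 from rfl,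
      show (e₂ x).2 = p ^ (i - 1) * x.2 from rfl, hmu x hx])
  have hzero : ∀ x ∈ (p ^ i * s).divisorsAntidiagonal,
      x ∉ s.divisorsAntidiagonal.image e₁ ∪ s.divisorsAntidiagonal.image e₂ →
      (moebius x.1 : ℤ) * Q ^ x.2 = 0 := by
    intro x hx hnx
    have hx1 : x.1 * x.2 = p ^ i * s := (Nat.mem_divisorsAntidiagonal.mp hx).1
    have hx1dvd : x.1 ∣ p ^ i * s := ⟨x.2, hx1.symm⟩
    obtain ⟨c, u, hci, hu, hxeq⟩ := dvd_pow_mul_decomp hp hps i x.1 hx1dvd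
    have hu0 : 0 < u := Nat.pos_of_dvd_of_pos hu hs
    obtain ⟨v, hv⟩ := hu
    have hv0 : 0 < v := by
      rcases Nat.eq_zero_or_pos v with rfl | h
      · omega
      · exact h
    by_cases hc2 : 2 ≤ c
    · have hnsq : ¬ Squarefree x.1 := by
        intro hsq
        have hpp : p * p ∣ x.1 := by
          rw [hxeq]
          refine Dvd.dvd.mul_right ?_ u
          have h22 : p * p = p ^ 2 := by ring
          rw [h22]
          exact pow_dvd_pow p hc2
        exact hp.one_lt.ne' (Nat.isUnit_iff.mp (hsq p hpp))
      rw [ArithmeticFunction.moebius_eq_zero_of_not_squarefree hnsq]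
      simp
    · exfalso
      apply hnx
      rw [Finset.mem_union]
      interval_cases c
      · -- c = 0 : x ∈ image e₁
        left
        rw [mem_image]
        refine ⟨(u, v), Nat.mem_divisorsAntidiagonal.mpr ⟨hv.symm, hs.ne'⟩, ?_⟩
        simp only [pow_zero, one_mul] at hxeq
        have hx2 : x.2 = p ^ i * v := by
          have hh : u * x.2 = u * (p ^ i * v) := by
            calc u * x.2 = x.1 * x.2 := by rw [hxeq]
              _ = p ^ i * s := hx1
              _ = p ^ i * (u * v) := by rw [hv]
              _ = u * (p ^ i * v) := by ring
          exact Nat.eq_of_mul_eq_mul_left hu0 hh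
        have : e₁ (u, v) = (u, p ^ i * v) := rfl
        rw [this]
        exact Prod.ext (by simp [hxeq]) (by simp [hx2])
      · -- c = 1 : x ∈ image e₂
        right
        rw [mem_image]
        refine ⟨(u, v), Nat.mem_divisorsAntidiagonal.mpr ⟨hv.symm, hs.ne'⟩, ?_⟩
        rw [pow_one] at hxeq
        have hx2 : x.2 = p ^ (i - 1) * v := by
          have hh : (p * u) * x.2 = (p * u) * (p ^ (i - 1) * v) := by
            calc (p * u) * x.2 = x.1 * x.2 := by rw [hxeq]
              _ = p ^ i * s := hx1
              _ = p ^ i * (u * v) := by rw [hv]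
              _ = (p * p ^ (i - 1)) * (u * v) := by rw [hpi]
              _ = (p * u) * (p ^ (i - 1) * v) := by ring
          exact Nat.eq_of_mul_eq_mul_left (Nat.mul_pos hp0 hu0) hh
        have : e₂ (u, v) = (p * u, p ^ (i - 1) * v) := rfl
        rw [this]
        exact Prod.ext (by simp [hxeq]) (by simp [hx2])
  calc ∑ x ∈ (p ^ i * s).divisorsAntidiagonal, (moebius x.1 : ℤ) * Q ^ x.2
      = ∑ x ∈ s.divisorsAntidiagonal.image e₁ ∪ s.divisorsAntidiagonal.image e₂,
          (moebius x.1 : ℤ) * Q ^ x.2 := (Finset.sum_subset hU hzero).symm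
    _ = (∑ y ∈ s.divisorsAntidiagonal.image e₁, (moebius y.1 : ℤ) * Q ^ y.2)
        + ∑ y ∈ s.divisorsAntidiagonal.image e₂, (moebius y.1 : ℤ) * Q ^ y.2 :=
          Finset.sum_union hdisj
    _ = ∑ x ∈ s.divisorsAntidiagonal,
          (moebius x.1 : ℤ) * (Q ^ (p ^ i * x.2) - Q ^ (p ^ (i - 1) * x.2)) := by
        rw [h1, h2, ← Finset.sum_add_distrib]
        exact Finset.sum_congr rfl (fun x _ => by ring)

end Moebius

section Step3

open ArithmeticFunction

lemma step_three {p r s : ℕ} (hp : p.Prime) (hs : 0 < s) (hps : ¬ p ∣ s) :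
    ∀ k : ℕ, ∑ t ∈ s.divisors, (moebius (s / t) : ℤ) * ((p : ℤ) ^ r) ^ (p ^ k * t)
    = ∑ i ∈ Finset.range (k + 1), ∑ t ∈ (p ^ i * s).divisors,
        (moebius t : ℤ) * ((p : ℤ) ^ r) ^ ((p ^ i * s) / t) := by
  set Q : ℤ := (p : ℤ) ^ r with hQ
  have hJ : ∀ j : ℕ, ∑ t ∈ s.divisors, (moebius (s / t) : ℤ) * Q ^ (p ^ j * t)
      = ∑ x ∈ s.divisorsAntidiagonal, (moebius x.1 : ℤ) * Q ^ (p ^ j * x.2) :=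
    fun j => (Nat.sum_divisorsAntidiagonal'
      (f := fun a b => (moebius a : ℤ) * Q ^ (p ^ j * b))).symm
  have hI : ∀ i : ℕ, ∑ t ∈ (p ^ i * s).divisors, (moebius t : ℤ) * Q ^ ((p ^ i * s) / t)
      = ∑ x ∈ (p ^ i * s).divisorsAntidiagonal, (moebius x.1 : ℤ) * Q ^ x.2 :=
    fun i => (Nat.sum_divisorsAntidiagonal (f := fun a b => (moebius a : ℤ) * Q ^ b)).symm
  intro k
  induction k with
  | zero =>
    rw [Finset.sum_range_one, hJ 0, hI 0]
    simp only [pow_zero, one_mul]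
  | succ k ih =>
    rw [Finset.sum_range_succ, ← ih, hJ (k + 1), hJ k, hI (k + 1),
      I_split hp hs hps Q (Nat.succ_pos k)]
    have hk1 : k + 1 - 1 = k := rfl
    have hpk : p ^ (k + 1) = p * p ^ k := pow_succ' p k
    rw [hk1, ← Finset.sum_add_distrib]
    refine Finset.sum_congr rfl (fun x _ => ?_)
    rw [hpk]
    ring

end Step3

/-- Let `p ∈ {2,3}`, `q = p^r`, and `d = -1` (with the convention `0⁻¹ = 0`) or `d = 3`
with `p = 2`.  Write `m = p^k·s` with `p ∤ s`.  Here `𝔽_{q^n}` (for `n ∣ m`) is realized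
inside `E = 𝔽_{q^m}` as `{z : z^{q^n} = z}`, the relative trace `tr_n : 𝔽_{q^n} → 𝔽_q` is
`z ↦ Σ_{i<n} z^{q^i}`, `H_{0,d}(n) = #{z ∈ 𝔽_{q^n} : tr_n(z) = 0, tr_n(z^d) = 0}`, and
`G_{0,d}(m)` counts such `z` of degree `m` over `𝔽_q`.  Then
`G_{0,d}(m) = Σ_{t ∣ s} μ(s/t)·H_{0,d}(p^k t) - Σ_{i=0}^{k-1} I(p^i s)`,
where `I(n) = Σ_{t ∣ n} μ(t)·q^{n/t}`. -/
theorem moebius_inversion_G_zero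
    (p r k s : ℕ) (hp : p = 2 ∨ p = 3) (hr : 0 < r) (hs : 0 < s) (hps : ¬ p ∣ s)
    (d : ℤ) (hd : d = -1 ∨ (d = 3 ∧ p = 2))
    (F E : Type) [Field F] [Fintype F] [Field E] [Fintype E] [Algebra F E]
    (hF : Fintype.card F = p ^ r) (hE : Fintype.card E = (p ^ r) ^ (p ^ k * s)) :
    (Nat.card {z : E // (minpoly F z).natDegree = p ^ k * s ∧
        (∑ i ∈ Finset.range (p ^ k * s), z ^ (p ^ r) ^ i) = 0 ∧
        (∑ i ∈ Finset.range (p ^ k * s), (z ^ d) ^ (p ^ r) ^ i) = 0} : ℤ) =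
      (∑ t ∈ s.divisors, (ArithmeticFunction.moebius (s / t)) *
          (Nat.card {z : E // z ^ (p ^ r) ^ (p ^ k * t) = z ∧
            (∑ i ∈ Finset.range (p ^ k * t), z ^ (p ^ r) ^ i) = 0 ∧
            (∑ i ∈ Finset.range (p ^ k * t), (z ^ d) ^ (p ^ r) ^ i) = 0} : ℤ)) -
      ∑ i ∈ Finset.range k, ∑ t ∈ (p ^ i * s).divisors,
          (ArithmeticFunction.moebius t) * ((p : ℤ) ^ r) ^ ((p ^ i * s) / t) := by
  classical
  have hpp : p.Prime := by
    rcases hp with rfl | rfl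
    · exact Nat.prime_two
    · exact Nat.prime_three
  have hd3 : d = -1 ∨ d = 3 := by
    rcases hd with h | ⟨h, -⟩
    · exact Or.inl h
    · exact Or.inr h
  -- filter versions of the counted sets
  have hGcard : ∀ u : ℕ, (Nat.card {z : E // (minpoly F z).natDegree = p ^ k * u ∧
      (∑ i ∈ Finset.range (p ^ k * u), z ^ (p ^ r) ^ i) = 0 ∧
      (∑ i ∈ Finset.range (p ^ k * u), (z ^ d) ^ (p ^ r) ^ i) = 0})
      = (univ.filter fun z : E => (minpoly F z).natDegree = p ^ k * u ∧
      (∑ i ∈ Finset.range (p ^ k * u), z ^ (p ^ r) ^ i) = 0 ∧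
      (∑ i ∈ Finset.range (p ^ k * u), (z ^ d) ^ (p ^ r) ^ i) = 0).card := by
    intro u
    rw [Nat.card_eq_fintype_card, Fintype.card_subtype]
  have hHcard : ∀ t : ℕ, (Nat.card {z : E // z ^ (p ^ r) ^ (p ^ k * t) = z ∧
      (∑ i ∈ Finset.range (p ^ k * t), z ^ (p ^ r) ^ i) = 0 ∧
      (∑ i ∈ Finset.range (p ^ k * t), (z ^ d) ^ (p ^ r) ^ i) = 0})
      = (univ.filter fun z : E => z ^ (p ^ r) ^ (p ^ k * t) = z ∧
      (∑ i ∈ Finset.range (p ^ k * t), z ^ (p ^ r) ^ i) = 0 ∧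
      (∑ i ∈ Finset.range (p ^ k * t), (z ^ d) ^ (p ^ r) ^ i) = 0).card := by
    intro t
    rw [Nat.card_eq_fintype_card, Fintype.card_subtype]
  -- step 1, cast to ℤ
  have hmain : ∀ t ∈ s.divisors,
      ((univ.filter fun z : E => z ^ (p ^ r) ^ (p ^ k * t) = z ∧
        (∑ i ∈ Finset.range (p ^ k * t), z ^ (p ^ r) ^ i) = 0 ∧
        (∑ i ∈ Finset.range (p ^ k * t), (z ^ d) ^ (p ^ r) ^ i) = 0).card : ℤ)
      = (∑ u ∈ t.divisors, ((univ.filter fun z : E =>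
          (minpoly F z).natDegree = p ^ k * u ∧
          (∑ i ∈ Finset.range (p ^ k * u), z ^ (p ^ r) ^ i) = 0 ∧
          (∑ i ∈ Finset.range (p ^ k * u), (z ^ d) ^ (p ^ r) ^ i) = 0).card : ℤ))
        + (if k = 0 then 0 else ((p : ℤ) ^ r) ^ (p ^ (k - 1) * t)) := by
    intro t ht
    have h := step_one (F := F) (E := E) hpp hr hs hps hd3 hF hE
      (Nat.mem_divisors.mp ht).1 (Nat.pos_of_mem_divisors ht)
    have h2 := congrArg (fun n : ℕ => (n : ℤ)) h
    rw [h2]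
    push_cast
    split_ifs with hk0
    · simp
    · push_cast
      ring
  -- main computation
  have key : ∑ t ∈ s.divisors, (ArithmeticFunction.moebius (s / t) : ℤ) *
      ((univ.filter fun z : E => z ^ (p ^ r) ^ (p ^ k * t) = z ∧
        (∑ i ∈ Finset.range (p ^ k * t), z ^ (p ^ r) ^ i) = 0 ∧
        (∑ i ∈ Finset.range (p ^ k * t), (z ^ d) ^ (p ^ r) ^ i) = 0).card : ℤ)
      = ((univ.filter fun z : E => (minpoly F z).natDegree = p ^ k * s ∧
          (∑ i ∈ Finset.range (p ^ k * s), z ^ (p ^ r) ^ i) = 0 ∧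
          (∑ i ∈ Finset.range (p ^ k * s), (z ^ d) ^ (p ^ r) ^ i) = 0).card : ℤ)
        + ∑ i ∈ Finset.range k, ∑ t ∈ (p ^ i * s).divisors,
            (ArithmeticFunction.moebius t : ℤ) * ((p : ℤ) ^ r) ^ ((p ^ i * s) / t) := by
    rw [Finset.sum_congr rfl (fun t ht => by rw [hmain t ht])]
    simp only [mul_add]
    rw [Finset.sum_add_distrib]
    congr 1
    · exact moebius_double_sum (fun u => ((univ.filter fun z : E =>
        (minpoly F z).natDegree = p ^ k * u ∧
        (∑ i ∈ Finset.range (p ^ k * u), z ^ (p ^ r) ^ i) = 0 ∧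
        (∑ i ∈ Finset.range (p ^ k * u), (z ^ d) ^ (p ^ r) ^ i) = 0).card : ℤ)) hs
    · by_cases hk0 : k = 0
      · subst hk0
        simp
      · simp only [if_neg hk0]
        have h3 := step_three (r := r) hpp hs hps (k - 1)
        rw [show k - 1 + 1 = k by omega] at h3
        exact h3
  rw [hGcard s]
  rw [Finset.sum_congr rfl (fun t _ => by rw [hHcard t] :
    ∀ t ∈ s.divisors, (ArithmeticFunction.moebius (s / t) : ℤ) *
      (Nat.card {z : E // z ^ (p ^ r) ^ (p ^ k * t) = z ∧
        (∑ i ∈ Finset.range (p ^ k * t), z ^ (p ^ r) ^ i) = 0 ∧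
        (∑ i ∈ Finset.range (p ^ k * t), (z ^ d) ^ (p ^ r) ^ i) = 0} : ℤ)
      = (ArithmeticFunction.moebius (s / t) : ℤ) *
      ((univ.filter fun z : E => z ^ (p ^ r) ^ (p ^ k * t) = z ∧
        (∑ i ∈ Finset.range (p ^ k * t), z ^ (p ^ r) ^ i) = 0 ∧
        (∑ i ∈ Finset.range (p ^ k * t), (z ^ d) ^ (p ^ r) ^ i) = 0).card : ℤ))]
  linarith [key]
end

section
/- Let p ∈ {2, 3}, q = p^r, let c ∈ 𝔽_q^*, and suppose either d = −1 (with the convention 0^{−1} = 0), or d = 3 and p = 2. Write m = p^k·s with p ∤ s. Then G_{c,d}(m) = Σ_{t | s} μ(s/t) · H_{c,d}(p^k·t), where μ is the Möbius function. -/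
open Finset

open Polynomial IntermediateField

section Helpers

variable {F E : Type} [Field F] [Fintype F] [Field E] [Algebra F E]

lemma myCharP_of_card {p n : ℕ} [Fintype E] (hp : p.Prime) (h : Fintype.card E = p ^ n) :
    CharP E p := by
  have hdvd : ringChar E ∣ p ^ n := by
    rw [← CharP.cast_eq_zero_iff E (ringChar E) (p ^ n), ← h]
    exact Nat.cast_card_eq_zero E
  have hcp : (ringChar E).Prime := CharP.char_is_prime E (ringChar E)
  have : ringChar E = p :=
    (Nat.prime_dvd_prime_iff_eq hcp hp).1 (hcp.dvd_of_dvd_pow hdvd)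
  exact this ▸ ringChar.charP E

lemma pow_iterate_q (q : ℕ) (z : E) (m : ℕ) : (fun x : E => x ^ q)^[m] z = z ^ q ^ m := by
  induction m with
  | zero => simp
  | succ m ih => rw [Function.iterate_succ_apply', ih, ← pow_mul, ← pow_succ]

lemma fixed_mul {q : ℕ} {z : E} (hz : z ^ q ^ e = z) (w : ℕ) : z ^ q ^ (e * w) = z := by
  induction w with
  | zero => simp
  | succ w ih => rw [mul_add, mul_one, pow_add, pow_mul, ih, hz]

lemma sum_split {q : ℕ} {z : E} {e : ℕ} (hz : z ^ q ^ e = z) (w : ℕ) :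
    ∑ i ∈ range (e * w), z ^ q ^ i = w • ∑ i ∈ range e, z ^ q ^ i := by
  induction w with
  | zero => simp
  | succ w ih =>
    rw [mul_add, mul_one, Finset.sum_range_add, ih, succ_nsmul]
    congr 1
    refine Finset.sum_congr rfl fun i _ => ?_
    rw [pow_add, pow_mul, fixed_mul hz w]

lemma fixed_mem_range_iff [Fintype E] (x : E) :
    x ^ Fintype.card F = x ↔ x ∈ Set.range (algebraMap F E) := by
  classical
  set q := Fintype.card F with hq
  have hq1 : 1 < q := Fintype.one_lt_card
  constructor
  · intro hx
    set A : Finset E := univ.filter (fun x : E => x ^ q = x) with hA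
    set B : Finset E := univ.image (algebraMap F E) with hB
    have hBA : B ⊆ A := by
      intro y hy
      simp only [hB, Finset.mem_image] at hy
      obtain ⟨a, _, rfl⟩ := hy
      simp only [hA, Finset.mem_filter, Finset.mem_univ, true_and]
      rw [← map_pow, FiniteField.pow_card]
    have hcardA : A.card ≤ q := by
      have hsub : A ⊆ (X ^ q - X : E[X]).roots.toFinset := by
        intro y hy
        simp only [hA, Finset.mem_filter, Finset.mem_univ, true_and] at hy
        rw [Multiset.mem_toFinset, Polynomial.mem_roots
          (FiniteField.X_pow_card_sub_X_ne_zero E hq1)]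
        simp [Polynomial.IsRoot, hy]
      calc A.card ≤ _ := Finset.card_le_card hsub
        _ ≤ Multiset.card (X ^ q - X : E[X]).roots := Multiset.toFinset_card_le _
        _ ≤ (X ^ q - X : E[X]).natDegree := Polynomial.card_roots' _
        _ = q := FiniteField.X_pow_card_sub_X_natDegree_eq E hq1
    have hcardB : B.card = q := by
      rw [hB, Finset.card_image_of_injective _ (algebraMap F E).injective, Finset.card_univ]
    have hAB : A = B := (Finset.eq_of_subset_of_card_le hBA (by omega)).symm
    have : x ∈ B := by
      rw [← hAB]
      simp only [hA, Finset.mem_filter, Finset.mem_univ, true_and]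
      exact hx
    simp only [hB, Finset.mem_image] at this
    obtain ⟨a, _, rfl⟩ := this
    exact ⟨a, rfl⟩
  · rintro ⟨a, rfl⟩
    rw [← map_pow, FiniteField.pow_card]

end Helpers

section Helpers2

variable {F E : Type} [Field F] [Fintype F] [Field E] [Algebra F E]

lemma pow_card_pow_deg [Fintype E] (z : E) :
    z ^ Fintype.card F ^ (minpoly F z).natDegree = z := by
  classical
  haveI : Module.Finite F E := Module.finite_iff_finite.2 inferInstance
  have hz : IsIntegral F z := .of_finite F z
  haveI : Fintype (F⟮z⟯ : IntermediateField F E) := Fintype.ofFinite _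
  have hcard : Fintype.card (F⟮z⟯ : IntermediateField F E)
      = Fintype.card F ^ (minpoly F z).natDegree := by
    rw [Module.card_eq_pow_finrank (K := F), IntermediateField.adjoin.finrank hz]
  have hpow := FiniteField.pow_card (IntermediateField.AdjoinSimple.gen F z)
  rw [hcard] at hpow
  have h2 := congrArg (algebraMap (F⟮z⟯ : IntermediateField F E) E) hpow
  rw [map_pow] at h2
  exact h2

lemma deg_le_of_fixed (p r : ℕ) [Fintype E] (hp : p.Prime) [CharP E p]
    (hF : Fintype.card F = p ^ r) {z : E} {g : ℕ} (hg : 0 < g)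
    (hfix : z ^ (p ^ r) ^ g = z) : (minpoly F z).natDegree ≤ g := by
  classical
  haveI : Fact p.Prime := ⟨hp⟩
  set q : ℕ := p ^ r with hq
  set φ : E →+* E := iterateFrobenius E p r with hφ
  have hφa : ∀ x : E, φ x = x ^ q := fun x => rfl
  set P : E[X] := ∏ i ∈ range g, (X - C (z ^ q ^ i)) with hP
  have hPmonic : P.Monic := monic_prod_of_monic _ _ fun i _ => monic_X_sub_C _
  have hmap : P.map φ = P := by
    rw [hP, Polynomial.map_prod]
    have hterm : ∀ i : ℕ, (X - C (z ^ q ^ i)).map φ = X - C (z ^ q ^ (i + 1)) := by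
      intro i
      rw [Polynomial.map_sub, Polynomial.map_X, Polynomial.map_C, hφa, ← pow_mul, ← pow_succ]
    simp only [hterm]
    have h1 := (Finset.prod_range_succ' (fun i => (X : E[X]) - C (z ^ q ^ i)) g).symm.trans
      (Finset.prod_range_succ (fun i => (X : E[X]) - C (z ^ q ^ i)) g)
    simp only [pow_zero, pow_one, hfix] at h1
    exact mul_right_cancel₀ (X_sub_C_ne_zero z) h1
  have hcoeff : ∀ n : ℕ, P.coeff n ∈ Set.range (algebraMap F E) := by
    intro n
    rw [← fixed_mem_range_iff, hF]
    have : φ (P.coeff n) = P.coeff n := by rw [← Polynomial.coeff_map, hmap]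
    rwa [hφa] at this
  obtain ⟨P₀, hP₀⟩ := (Polynomial.mem_lifts P).1 ((Polynomial.lifts_iff_coeff_lifts P).2 hcoeff)
  have hne : P₀ ≠ 0 := by
    rintro rfl
    rw [Polynomial.map_zero] at hP₀
    exact hPmonic.ne_zero hP₀.symm
  have haeval : Polynomial.aeval z P₀ = 0 := by
    rw [Polynomial.aeval_def, ← Polynomial.eval_map, hP₀, hP, Polynomial.eval_prod]
    refine Finset.prod_eq_zero (Finset.mem_range.2 hg) ?_
    simp
  have hdvd := minpoly.dvd F z haeval
  calc (minpoly F z).natDegree ≤ P₀.natDegree := Polynomial.natDegree_le_of_dvd hdvd hne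
    _ = P.natDegree := by
        rw [← hP₀, Polynomial.natDegree_map_eq_of_injective (algebraMap F E).injective]
    _ = g := by
        rw [hP, Polynomial.natDegree_prod]
        · simp only [Polynomial.natDegree_X_sub_C]; simp
        · intro i _; exact X_sub_C_ne_zero _

lemma fixed_iff_deg_dvd (p r : ℕ) [Fintype E] (hp : p.Prime) [CharP E p]
    (hF : Fintype.card F = p ^ r) (z : E) (n : ℕ) :
    z ^ (p ^ r) ^ n = z ↔ (minpoly F z).natDegree ∣ n := by
  classical
  haveI : Module.Finite F E := Module.finite_iff_finite.2 inferInstance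
  have hz : IsIntegral F z := .of_finite F z
  have hdpos : 0 < (minpoly F z).natDegree := minpoly.natDegree_pos hz
  have hdfix : z ^ (p ^ r) ^ (minpoly F z).natDegree = z := by
    rw [← hF]; exact pow_card_pow_deg z
  constructor
  · intro hfix
    rcases Nat.eq_zero_or_pos n with rfl | hn
    · exact dvd_zero _
    set f : E → E := fun x => x ^ p ^ r with hf
    have hiter : ∀ m : ℕ, f^[m] z = z ^ (p ^ r) ^ m := fun m => pow_iterate_q _ z m
    have hpn : Function.IsPeriodicPt f n z := by
      show f^[n] z = z; rw [hiter]; exact hfix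
    have hpd : Function.IsPeriodicPt f (minpoly F z).natDegree z := by
      show f^[_] z = z; rw [hiter]; exact hdfix
    have hgcd := hpn.gcd hpd
    have hgpos : 0 < Nat.gcd n (minpoly F z).natDegree := Nat.gcd_pos_of_pos_left _ hn
    have hgfix : z ^ (p ^ r) ^ Nat.gcd n (minpoly F z).natDegree = z := by
      rw [← hiter]; exact hgcd
    have hle := deg_le_of_fixed p r hp hF hgpos hgfix
    have hge := Nat.le_of_dvd hdpos (Nat.gcd_dvd_right n _)
    have : Nat.gcd n (minpoly F z).natDegree = (minpoly F z).natDegree := le_antisymm hge hle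
    exact this ▸ Nat.gcd_dvd_left n _
  · rintro ⟨w, hw⟩
    rw [hw]
    exact fixed_mul hdfix w

lemma natDegree_minpoly_neg [Fintype E] (z : E) :
    (minpoly F (-z)).natDegree = (minpoly F z).natDegree := by
  haveI : Module.Finite F E := Module.finite_iff_finite.2 inferInstance
  have hz : IsIntegral F z := .of_finite F z
  have hz' : IsIntegral F (-z) := .of_finite F (-z)
  rw [← IntermediateField.adjoin.finrank hz, ← IntermediateField.adjoin.finrank hz']
  have hEq : (F⟮-z⟯ : IntermediateField F E) = F⟮z⟯ := by
    apply le_antisymm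
    · rw [IntermediateField.adjoin_simple_le_iff]
      exact neg_mem (IntermediateField.mem_adjoin_simple_self F z)
    · rw [IntermediateField.adjoin_simple_le_iff]
      have h := neg_mem (IntermediateField.mem_adjoin_simple_self F (-z))
      rwa [neg_neg] at h
  rw [hEq]

end Helpers2

section Helpers3

variable {F E : Type} [Field F] [Fintype F] [Field E] [Algebra F E]

open scoped Classical in
lemma card_filter_neg_c (r : ℕ) [Fintype E] (e : ℕ) (c' : F) :
    (univ.filter fun z : E => (minpoly F z).natDegree = e ∧
        (∑ i ∈ range e, z ^ (3 ^ r) ^ i) = 0 ∧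
        (∑ i ∈ range e, (z ^ (-1 : ℤ)) ^ (3 ^ r) ^ i) = algebraMap F E (-c')).card =
    (univ.filter fun z : E => (minpoly F z).natDegree = e ∧
        (∑ i ∈ range e, z ^ (3 ^ r) ^ i) = 0 ∧
        (∑ i ∈ range e, (z ^ (-1 : ℤ)) ^ (3 ^ r) ^ i) = algebraMap F E c').card := by
  classical
  have hodd : ∀ i : ℕ, Odd ((3 ^ r) ^ i) := fun i => Odd.pow (Odd.pow (by decide))
  have hinv : ∀ x : E, x ^ (-1 : ℤ) = x⁻¹ := fun x => by
    rw [show ((-1 : ℤ)) = -(1 : ℤ) from rfl, zpow_neg, zpow_one]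
  have hstep : ∀ (c'' : F) (z : E),
      ((minpoly F z).natDegree = e ∧
        (∑ i ∈ range e, z ^ (3 ^ r) ^ i) = 0 ∧
        (∑ i ∈ range e, (z ^ (-1 : ℤ)) ^ (3 ^ r) ^ i) = algebraMap F E (-c'')) →
      ((minpoly F (-z)).natDegree = e ∧
        (∑ i ∈ range e, (-z) ^ (3 ^ r) ^ i) = 0 ∧
        (∑ i ∈ range e, ((-z) ^ (-1 : ℤ)) ^ (3 ^ r) ^ i) = algebraMap F E c'') := by
    rintro c'' z ⟨h1, h2, h3⟩
    refine ⟨by rw [natDegree_minpoly_neg]; exact h1, ?_, ?_⟩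
    · have hterm : ∀ i ∈ range e, (-z) ^ (3 ^ r) ^ i = -(z ^ (3 ^ r) ^ i) :=
        fun i _ => (hodd i).neg_pow z
      rw [Finset.sum_congr rfl hterm, Finset.sum_neg_distrib, h2, neg_zero]
    · have hterm : ∀ i ∈ range e,
          ((-z) ^ (-1 : ℤ)) ^ (3 ^ r) ^ i = -((z ^ (-1 : ℤ)) ^ (3 ^ r) ^ i) := by
        intro i _
        rw [hinv, hinv, inv_neg]
        exact (hodd i).neg_pow z⁻¹
      rw [Finset.sum_congr rfl hterm, Finset.sum_neg_distrib, h3, ← map_neg, neg_neg]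
  refine Finset.card_nbij' (fun z => -z) (fun z => -z) ?_ ?_ ?_ ?_
  · intro a ha
    simp only [Finset.mem_coe, Finset.mem_filter, Finset.mem_univ, true_and] at ha ⊢
    exact hstep c' a ha
  · intro a ha
    simp only [Finset.mem_coe, Finset.mem_filter, Finset.mem_univ, true_and] at ha ⊢
    refine hstep (-c') a ?_
    rwa [neg_neg]
  · intro a _; simp
  · intro a _; simp
end Helpers3

variable {F E : Type} [Field F] [Fintype F] [Field E] [Algebra F E]

open scoped Classical in
lemma key_count (p r k : ℕ) [Fintype E] (hp : p = 2 ∨ p = 3)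
    [CharP E p] [CharP F p] (hF : Fintype.card F = p ^ r)
    (d : ℤ) (hd : d = -1 ∨ (d = 3 ∧ p = 2))
    (c : F) (hc : c ≠ 0) (t : ℕ) (ht : 0 < t) (hpt : ¬ p ∣ t) :
    (univ.filter fun z : E => z ^ (p ^ r) ^ (p ^ k * t) = z ∧
        (∑ i ∈ Finset.range (p ^ k * t), z ^ (p ^ r) ^ i) = 0 ∧
        (∑ i ∈ Finset.range (p ^ k * t), (z ^ d) ^ (p ^ r) ^ i) = algebraMap F E c).card
    = ∑ u ∈ t.divisors, (univ.filter fun z : E =>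
        (minpoly F z).natDegree = p ^ k * u ∧
        (∑ i ∈ Finset.range (p ^ k * u), z ^ (p ^ r) ^ i) = 0 ∧
        (∑ i ∈ Finset.range (p ^ k * u), (z ^ d) ^ (p ^ r) ^ i) = algebraMap F E c).card := by
  have hpp : p.Prime := by rcases hp with rfl | rfl <;> norm_num
  haveI : Fact p.Prime := ⟨hpp⟩
  haveI : Module.Finite F E := Module.finite_iff_finite.2 inferInstance
  have halginj : Function.Injective (algebraMap F E) := (algebraMap F E).injective
  have hpk : (0:ℕ) < p ^ k := pow_pos hpp.pos k
  have hzd : ∀ (x : E) (a : ℕ), x ^ (p ^ r) ^ a = x → (x ^ d) ^ (p ^ r) ^ a = x ^ d := by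
    intro x a hx
    have h1 : ∀ y : E, y ^ (p ^ r) ^ a = iterateFrobenius E p (r * a) y := by
      intro y; rw [iterateFrobenius_def, pow_mul]
    rw [h1, map_zpow₀, ← h1, hx]
  have hdfix : ∀ z : E, z ^ (p ^ r) ^ (minpoly F z).natDegree = z := by
    intro z; rw [← hF]; exact pow_card_pow_deg z
  have hcastE : ∀ w : ℕ, ¬ p ∣ w → ((w : ℕ) : E) ≠ 0 := by
    intro w hw; rwa [Ne, CharP.cast_eq_zero_iff E p w]
  have hbF : ∀ w : ℕ, ¬ p ∣ w → (((w:ℕ):F) = 1 ∨ ((w:ℕ):F) = -1) := by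
    intro w hw
    rcases hp with rfl | rfl
    · left
      have h1 : w % 2 = 1 := by omega
      have h2 : (2:F) = 0 := by exact_mod_cast (CharP.cast_eq_zero F 2)
      calc ((w:ℕ):F) = ((2 * (w/2) + w % 2 : ℕ) : F) := by rw [Nat.div_add_mod]
        _ = 1 := by push_cast [h1]; linear_combination ((w/2 : ℕ) : F) * h2
    · have h3 : (3:F) = 0 := by exact_mod_cast (CharP.cast_eq_zero F 3)
      have h1 : w % 3 = 1 ∨ w % 3 = 2 := by omega
      rcases h1 with h1 | h1
      · left
        calc ((w:ℕ):F) = ((3 * (w/3) + w % 3 : ℕ) : F) := by rw [Nat.div_add_mod]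
          _ = 1 := by push_cast [h1]; linear_combination ((w/3 : ℕ) : F) * h3
      · right
        calc ((w:ℕ):F) = ((3 * (w/3) + w % 3 : ℕ) : F) := by rw [Nat.div_add_mod]
          _ = -1 := by push_cast [h1]; linear_combination (((w/3 : ℕ) : F) + 1) * h3
  -- existence of the divisor u for each member of the H-set
  have hdeginfo : ∀ z : E, (z ^ (p ^ r) ^ (p ^ k * t) = z ∧
        (∑ i ∈ Finset.range (p ^ k * t), z ^ (p ^ r) ^ i) = 0 ∧
        (∑ i ∈ Finset.range (p ^ k * t), (z ^ d) ^ (p ^ r) ^ i) = algebraMap F E c) →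
      ∃ u, u ∣ t ∧ (minpoly F z).natDegree = p ^ k * u := by
    rintro z ⟨hfix, hS, hS'⟩
    have hdvd : (minpoly F z).natDegree ∣ p ^ k * t :=
      (fixed_iff_deg_dvd p r hpp hF z _).1 hfix
    obtain ⟨w, hw⟩ := hdvd
    have hpw : ¬ p ∣ w := by
      intro hpw
      have he := hdfix z
      have h2 : (∑ i ∈ Finset.range (p ^ k * t), (z ^ d) ^ (p ^ r) ^ i)
          = w • ∑ i ∈ Finset.range ((minpoly F z).natDegree), (z ^ d) ^ (p ^ r) ^ i := by
        rw [hw]; exact sum_split (hzd z _ he) w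
      have h4 : algebraMap F E c = 0 := by
        rw [← hS', h2, nsmul_eq_mul, (CharP.cast_eq_zero_iff E p w).2 hpw, zero_mul]
      exact hc (halginj (by rw [h4, map_zero]))
    have hcop : Nat.Coprime (p ^ k) w :=
      Nat.Coprime.pow_left k ((Nat.Prime.coprime_iff_not_dvd hpp).2 hpw)
    have hpkdeg : p ^ k ∣ (minpoly F z).natDegree :=
      hcop.dvd_of_dvd_mul_right (by rw [← hw]; exact dvd_mul_right _ t)
    obtain ⟨u, hu⟩ := hpkdeg
    refine ⟨u, ?_, hu⟩
    have h5 : p ^ k * t = p ^ k * (u * w) := by rw [hw, hu, mul_assoc]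
    exact ⟨w, Nat.eq_of_mul_eq_mul_left hpk h5⟩
  -- pointwise characterization on each piece
  have EQ1 : ∀ u, u ∣ t → ∀ z : E,
      ((z ^ (p ^ r) ^ (p ^ k * t) = z ∧
        (∑ i ∈ Finset.range (p ^ k * t), z ^ (p ^ r) ^ i) = 0 ∧
        (∑ i ∈ Finset.range (p ^ k * t), (z ^ d) ^ (p ^ r) ^ i) = algebraMap F E c) ∧
        (minpoly F z).natDegree = p ^ k * u) ↔
      ((minpoly F z).natDegree = p ^ k * u ∧
        (∑ i ∈ Finset.range (p ^ k * u), z ^ (p ^ r) ^ i) = 0 ∧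
        (∑ i ∈ Finset.range (p ^ k * u), (z ^ d) ^ (p ^ r) ^ i)
          = algebraMap F E (((t / u : ℕ) : F)⁻¹ * c)) := by
    intro u hu z
    have hw : p ^ k * t = (p ^ k * u) * (t / u) := by
      rw [mul_assoc, Nat.mul_div_cancel' hu]
    have hpw : ¬ p ∣ t / u := fun h => hpt (h.trans (Nat.div_dvd_of_dvd hu))
    have hwE : ((t / u : ℕ) : E) ≠ 0 := hcastE _ hpw
    constructor
    · rintro ⟨⟨hfix, hS, hS'⟩, hdeg⟩
      have he : z ^ (p ^ r) ^ (p ^ k * u) = z := by rw [← hdeg]; exact hdfix z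
      have hsplit1 := sum_split (q := p ^ r) he (t / u)
      have hsplit2 := sum_split (q := p ^ r) (hzd z _ he) (t / u)
      rw [← hw] at hsplit1 hsplit2
      rw [hS] at hsplit1
      rw [hS'] at hsplit2
      have hS0 : (∑ i ∈ Finset.range (p ^ k * u), z ^ (p ^ r) ^ i) = 0 := by
        rw [nsmul_eq_mul] at hsplit1
        exact (mul_eq_zero.1 hsplit1.symm).resolve_left hwE
      have hS'0 : (∑ i ∈ Finset.range (p ^ k * u), (z ^ d) ^ (p ^ r) ^ i)
          = algebraMap F E (((t / u : ℕ) : F)⁻¹ * c) := by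
        rw [map_mul, map_inv₀, map_natCast]
        rw [nsmul_eq_mul] at hsplit2
        rw [hsplit2, inv_mul_cancel_left₀ hwE]
      exact ⟨hdeg, hS0, hS'0⟩
    · rintro ⟨hdeg, hS, hS'⟩
      have he : z ^ (p ^ r) ^ (p ^ k * u) = z := by rw [← hdeg]; exact hdfix z
      refine ⟨⟨?_, ?_, ?_⟩, hdeg⟩
      · rw [hw]; exact fixed_mul he (t / u)
      · rw [hw, sum_split he, hS, smul_zero]
      · rw [hw, sum_split (hzd z _ he), hS', nsmul_eq_mul, map_mul, map_inv₀, map_natCast,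
          mul_inv_cancel_left₀ hwE]
  -- the cover
  have hcover : (univ.filter fun z : E => z ^ (p ^ r) ^ (p ^ k * t) = z ∧
        (∑ i ∈ Finset.range (p ^ k * t), z ^ (p ^ r) ^ i) = 0 ∧
        (∑ i ∈ Finset.range (p ^ k * t), (z ^ d) ^ (p ^ r) ^ i) = algebraMap F E c)
      = t.divisors.biUnion (fun u => univ.filter fun z : E =>
        ((z ^ (p ^ r) ^ (p ^ k * t) = z ∧
        (∑ i ∈ Finset.range (p ^ k * t), z ^ (p ^ r) ^ i) = 0 ∧
        (∑ i ∈ Finset.range (p ^ k * t), (z ^ d) ^ (p ^ r) ^ i) = algebraMap F E c) ∧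
        (minpoly F z).natDegree = p ^ k * u)) := by
    ext z
    simp only [Finset.mem_filter, Finset.mem_biUnion, Finset.mem_univ, true_and,
      Nat.mem_divisors]
    constructor
    · intro hz
      obtain ⟨u, hu, hdeg⟩ := hdeginfo z hz
      exact ⟨u, ⟨hu, ht.ne'⟩, hz, hdeg⟩
    · rintro ⟨u, _, hz, _⟩; exact hz
  rw [hcover, Finset.card_biUnion]
  swap
  · intro u hu u' hu' huu'
    rw [Function.onFun, Finset.disjoint_left]
    rintro z hz hz'
    simp only [Finset.mem_filter] at hz hz'
    exact huu' (Nat.eq_of_mul_eq_mul_left hpk (hz.2.2.symm.trans hz'.2.2))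
  refine Finset.sum_congr rfl fun u hu => ?_
  obtain ⟨hu_dvd, -⟩ := Nat.mem_divisors.1 hu
  have hfil : (univ.filter fun z : E =>
      ((z ^ (p ^ r) ^ (p ^ k * t) = z ∧
        (∑ i ∈ Finset.range (p ^ k * t), z ^ (p ^ r) ^ i) = 0 ∧
        (∑ i ∈ Finset.range (p ^ k * t), (z ^ d) ^ (p ^ r) ^ i) = algebraMap F E c) ∧
        (minpoly F z).natDegree = p ^ k * u))
      = univ.filter (fun z : E => (minpoly F z).natDegree = p ^ k * u ∧
        (∑ i ∈ Finset.range (p ^ k * u), z ^ (p ^ r) ^ i) = 0 ∧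
        (∑ i ∈ Finset.range (p ^ k * u), (z ^ d) ^ (p ^ r) ^ i)
          = algebraMap F E (((t / u : ℕ) : F)⁻¹ * c)) := by
    apply Finset.filter_congr
    intro z _
    exact EQ1 u hu_dvd z
  rw [hfil]
  have hpw : ¬ p ∣ t / u := fun h => hpt (h.trans (Nat.div_dvd_of_dvd hu_dvd))
  rcases hbF (t / u) hpw with hb1 | hb2
  · rw [hb1, inv_one, one_mul]
  · rw [hb2, inv_neg_one, neg_one_mul]
    rcases hp with rfl | rfl
    · rw [CharTwo.neg_eq]
    · have hd1 : d = -1 := by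
        rcases hd with h | ⟨-, h⟩
        · exact h
        · exact absurd h (by norm_num)
      subst hd1
      exact card_filter_neg_c r (3 ^ k * u) c


/-- Let `p ∈ {2,3}`, `q = p^r`, `c ∈ 𝔽_q^*`, and `d = -1` (with the convention `0⁻¹ = 0`)
or `d = 3` with `p = 2`.  Write `m = p^k·s` with `p ∤ s`.  Here `𝔽_{q^n}` (for `n ∣ m`) is
realized inside `E = 𝔽_{q^m}` as `{z : z^{q^n} = z}`, the relative trace
`tr_n : 𝔽_{q^n} → 𝔽_q` is `z ↦ Σ_{i<n} z^{q^i}`,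
`H_{c,d}(n) = #{z ∈ 𝔽_{q^n} : tr_n(z) = 0, tr_n(z^d) = c}`, and `G_{c,d}(m)` counts such
`z` of degree `m` over `𝔽_q`.  Then `G_{c,d}(m) = Σ_{t ∣ s} μ(s/t)·H_{c,d}(p^k t)`. -/
theorem moebius_inversion_G_nonzero
    (p r k s : ℕ) (hp : p = 2 ∨ p = 3) (hr : 0 < r) (hs : 0 < s) (hps : ¬ p ∣ s)
    (d : ℤ) (hd : d = -1 ∨ (d = 3 ∧ p = 2))
    (F E : Type) [Field F] [Fintype F] [Field E] [Fintype E] [Algebra F E]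
    (hF : Fintype.card F = p ^ r) (hE : Fintype.card E = (p ^ r) ^ (p ^ k * s))
    (c : F) (hc : c ≠ 0) :
    (Nat.card {z : E // (minpoly F z).natDegree = p ^ k * s ∧
        (∑ i ∈ Finset.range (p ^ k * s), z ^ (p ^ r) ^ i) = 0 ∧
        (∑ i ∈ Finset.range (p ^ k * s), (z ^ d) ^ (p ^ r) ^ i) = algebraMap F E c} : ℤ) =
      ∑ t ∈ s.divisors, (ArithmeticFunction.moebius (s / t)) *
          (Nat.card {z : E // z ^ (p ^ r) ^ (p ^ k * t) = z ∧
            (∑ i ∈ Finset.range (p ^ k * t), z ^ (p ^ r) ^ i) = 0 ∧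
            (∑ i ∈ Finset.range (p ^ k * t), (z ^ d) ^ (p ^ r) ^ i) =
              algebraMap F E c} : ℤ) := by
  classical
  have hpp : p.Prime := by rcases hp with rfl | rfl <;> norm_num
  haveI : Fact p.Prime := ⟨hpp⟩
  haveI hCE : CharP E p := myCharP_of_card hpp (by rw [hE, ← pow_mul])
  haveI hCF : CharP F p := myCharP_of_card hpp hF
  set f : ℕ → ℤ := fun u => ((univ.filter fun z : E =>
        (minpoly F z).natDegree = p ^ k * u ∧
        (∑ i ∈ Finset.range (p ^ k * u), z ^ (p ^ r) ^ i) = 0 ∧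
        (∑ i ∈ Finset.range (p ^ k * u), (z ^ d) ^ (p ^ r) ^ i) = algebraMap F E c).card : ℤ)
    with hf
  set g : ℕ → ℤ := fun t' => ((univ.filter fun z : E =>
        z ^ (p ^ r) ^ (p ^ k * t') = z ∧
        (∑ i ∈ Finset.range (p ^ k * t'), z ^ (p ^ r) ^ i) = 0 ∧
        (∑ i ∈ Finset.range (p ^ k * t'), (z ^ d) ^ (p ^ r) ^ i) = algebraMap F E c).card : ℤ)
    with hg
  have hkey : ∀ n : ℕ, n > 0 → n ∈ {x : ℕ | x ∣ s} → (∑ u ∈ n.divisors, f u) = g n := by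
    intro n hn hns
    have hns' : n ∣ s := hns
    have hptn : ¬ p ∣ n := fun h => hps (h.trans hns')
    have hkc := key_count (F := F) (E := E) p r k hp hF d hd c hc n hn hptn
    simp only [hf, hg]
    exact_mod_cast hkc.symm
  have hmoeb := (ArithmeticFunction.sum_eq_iff_sum_mul_moebius_eq_on {x : ℕ | x ∣ s}
      (fun a b hab hb => hab.trans hb)).1 hkey s hs (dvd_refl s)
  have hright : (∑ t ∈ s.divisors,
        ((ArithmeticFunction.moebius (s / t) : ℤ)) * g t)
      = ∑ x ∈ s.divisorsAntidiagonal, ((ArithmeticFunction.moebius x.1 : ℤ)) * g x.2 :=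
    (Nat.sum_divisorsAntidiagonal' (f := fun a b => (ArithmeticFunction.moebius a : ℤ) * g b)).symm
  have hcardconv : ∀ (P : E → Prop) (inst : DecidablePred P),
      (Nat.card {z : E // P z}) = (univ.filter P).card := by
    intro P inst
    rw [Nat.card_eq_fintype_card]
    exact Fintype.card_subtype P
  calc (Nat.card {z : E // (minpoly F z).natDegree = p ^ k * s ∧
        (∑ i ∈ Finset.range (p ^ k * s), z ^ (p ^ r) ^ i) = 0 ∧
        (∑ i ∈ Finset.range (p ^ k * s), (z ^ d) ^ (p ^ r) ^ i) = algebraMap F E c} : ℤ)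
      = f s := by
        simp only [hf]
        norm_cast
        exact hcardconv _ _
    _ = ∑ x ∈ s.divisorsAntidiagonal, ((ArithmeticFunction.moebius x.1 : ℤ)) * g x.2 := by
        rw [← hmoeb]
        refine Finset.sum_congr rfl fun x _ => ?_
        rw [Int.cast_id]
    _ = ∑ t ∈ s.divisors, ((ArithmeticFunction.moebius (s / t) : ℤ)) * g t := hright.symm
    _ = _ := by
        refine Finset.sum_congr rfl fun t _ => ?_
        congr 1
        simp only [hg]
        norm_cast
        exact (hcardconv _ _).symm
end

section
/- Let p ∈ {2, 3}, q = p^r, c ∈ 𝔽_q, and m ≥ 2. Then m times the number of monic irreducible polynomials x^m + a_{m−1}x^{m−1} + ⋯ + a_1x + a_0 in 𝔽_q[x] with a_{m−1} = c and a_1 = 0 equals #{z ∈ 𝔽_{q^m} : z has degree m over 𝔽_q, Tr_{𝔽_{q^m}/𝔽_q}(z) = 0, Tr_{𝔽_{q^m}/𝔽_q}(z^{−1}) = c} (i.e., equals G_{c,−1}(m)). -/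
open Finset

section KloostermanAux

open Polynomial IntermediateField

set_option linter.unusedSectionVars false

variable {F E : Type} [Field F] [Fintype F] [Field E] [Fintype E] [Algebra F E]

private lemma aux_deg_adjoin (z : E) : (minpoly F z).natDegree = Module.finrank F F⟮z⟯ :=
  (IntermediateField.adjoin.finrank (IsIntegral.of_finite F z)).symm

private lemma aux_adjoin_invneg (z : E) (hz : z ≠ 0) : F⟮(-z⁻¹ : E)⟯ = F⟮z⟯ := by
  apply le_antisymm
  · exact adjoin_le_iff.mpr (by
      simp only [Set.singleton_subset_iff, SetLike.mem_coe]
      exact neg_mem (inv_mem (mem_adjoin_simple_self F z)))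
  · apply adjoin_le_iff.mpr
    simp only [Set.singleton_subset_iff, SetLike.mem_coe]
    have h2 : -(-z⁻¹)⁻¹ ∈ F⟮(-z⁻¹ : E)⟯ := neg_mem (inv_mem (mem_adjoin_simple_self F _))
    have h3 : z = -(-z⁻¹)⁻¹ := by rw [inv_neg, inv_inv, neg_neg]
    simpa only [← h3] using h2

private lemma aux_deg_invneg (z : E) (hz : z ≠ 0) :
    (minpoly F (-z⁻¹ : E)).natDegree = (minpoly F z).natDegree := by
  rw [aux_deg_adjoin, aux_deg_adjoin, aux_adjoin_invneg z hz]

private lemma aux_adjoin_inv (z : E) : F⟮(z⁻¹ : E)⟯ = F⟮z⟯ := by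
  apply le_antisymm
  · exact adjoin_le_iff.mpr (by
      simp only [Set.singleton_subset_iff, SetLike.mem_coe]
      exact inv_mem (mem_adjoin_simple_self F z))
  · apply adjoin_le_iff.mpr
    simp only [Set.singleton_subset_iff, SetLike.mem_coe]
    have h2 : (z⁻¹)⁻¹ ∈ F⟮(z⁻¹ : E)⟯ := inv_mem (mem_adjoin_simple_self F _)
    have h3 : z = (z⁻¹)⁻¹ := by rw [inv_inv]
    simpa only [← h3] using h2

private lemma aux_deg_inv (z : E) :
    (minpoly F (z⁻¹ : E)).natDegree = (minpoly F z).natDegree := by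
  rw [aux_deg_adjoin, aux_deg_adjoin, aux_adjoin_inv z]

private lemma aux_trace_eq (z : E) (hz : (minpoly F z).natDegree = Module.finrank F E) :
    Algebra.trace F E z = -((minpoly F z).nextCoeff) := by
  have hint : IsIntegral F z := .of_finite F z
  have htop : F⟮z⟯ = ⊤ := by
    have h1 : Module.finrank F F⟮z⟯ = Module.finrank F E := by
      rw [IntermediateField.adjoin.finrank hint, hz]
    exact IntermediateField.eq_of_le_of_finrank_eq le_top
      (by rw [h1, IntermediateField.finrank_top'])
  let e : F⟮z⟯ ≃ₐ[F] E := (IntermediateField.equivOfEq htop).trans IntermediateField.topEquiv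
  let pb := (IntermediateField.adjoin.powerBasis hint).map e
  have hgen : pb.gen = z := rfl
  have := pb.trace_gen_eq_nextCoeff_minpoly
  rwa [hgen] at this

private lemma aux_minpoly_inv (z : E) (hz : z ≠ 0) :
    minpoly F z⁻¹ = C ((minpoly F z).coeff 0)⁻¹ * (minpoly F z).reverse := by
  have hint : IsIntegral F z := .of_finite F z
  have hint' : IsIntegral F z⁻¹ := .of_finite F z⁻¹
  set f := minpoly F z with hf
  have h0 : f.coeff 0 ≠ 0 := minpoly.coeff_zero_ne_zero hint hz
  have hfne : f ≠ 0 := minpoly.ne_zero hint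
  have htd : f.natTrailingDegree = 0 := natTrailingDegree_eq_zero.mpr (Or.inr h0)
  have hrevdeg : f.reverse.natDegree = f.natDegree := by
    rw [reverse_natDegree, htd, Nat.sub_zero]
  have hCne : (C (f.coeff 0)⁻¹ : F[X]) ≠ 0 := by
    simpa using inv_ne_zero h0
  have hrevne : f.reverse ≠ 0 := by simpa using hfne
  have hg_deg : (C (f.coeff 0)⁻¹ * f.reverse).natDegree = f.natDegree := by
    rw [natDegree_mul hCne hrevne, natDegree_C, hrevdeg, zero_add]
  have hg_monic : (C (f.coeff 0)⁻¹ * f.reverse).Monic := by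
    have : (C (f.coeff 0)⁻¹ * f.reverse).leadingCoeff = 1 := by
      rw [leadingCoeff_mul, leadingCoeff_C, reverse_leadingCoeff, trailingCoeff,
        htd, inv_mul_cancel₀ h0]
    exact this
  have haev : (Polynomial.aeval (z⁻¹ : E)) (C (f.coeff 0)⁻¹ * f.reverse) = 0 := by
    have : Invertible z := invertibleOfNonzero hz
    have h1 : (Polynomial.aeval (z⁻¹ : E)) f.reverse = 0 := by
      have := (eval₂_reverse_eq_zero_iff (algebraMap F E) z f).mpr ?_
      · rwa [invOf_eq_inv, ← aeval_def] at this
      · exact minpoly.aeval F z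
    rw [map_mul, h1, mul_zero]
  have hdvd : minpoly F z⁻¹ ∣ C (f.coeff 0)⁻¹ * f.reverse := minpoly.dvd F z⁻¹ haev
  have hadj : F⟮(z⁻¹ : E)⟯ = F⟮z⟯ := aux_adjoin_inv z
  have hdeginv : (minpoly F z⁻¹).natDegree = f.natDegree := by
    rw [aux_deg_adjoin, aux_deg_adjoin, hadj]
  obtain ⟨k, hk⟩ := hdvd
  have hmne : minpoly F z⁻¹ ≠ 0 := minpoly.ne_zero hint'
  have hgne : (C (f.coeff 0)⁻¹ * f.reverse) ≠ 0 := hg_monic.ne_zero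
  have hkne : k ≠ 0 := by rintro rfl; rw [mul_zero] at hk; exact hgne hk
  have hkdeg : k.natDegree = 0 := by
    have := hg_deg
    rw [hk, natDegree_mul hmne hkne, hdeginv] at this
    omega
  have hk1 : k = 1 := by
    have hlc : k.leadingCoeff = 1 := by
      have := hg_monic
      rw [Monic, hk, leadingCoeff_mul, (minpoly.monic hint').leadingCoeff, one_mul] at this
      exact this
    have hco : k.coeff 0 = k.leadingCoeff := by
      rw [Polynomial.leadingCoeff, hkdeg]
    rw [eq_C_of_natDegree_eq_zero hkdeg, hco, hlc, map_one]
  rw [hk, hk1, mul_one]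

private lemma aux_card_roots [DecidableEq F[X]] (f : F[X]) (hmon : f.Monic)
    (hirr : Irreducible f) (hdeg : f.natDegree = Module.finrank F E) :
    (Finset.univ.filter fun w : E => minpoly F w = f).card = f.natDegree := by
  classical
  haveI : Fact (Irreducible f) := ⟨hirr⟩
  have hf0 : f ≠ 0 := hmon.ne_zero
  haveI : FiniteDimensional F (AdjoinRoot f) := (AdjoinRoot.powerBasis hf0).finite
  haveI : Finite (AdjoinRoot f) := Module.finite_of_finite F
  haveI : Fintype (AdjoinRoot f) := Fintype.ofFinite _
  have hcardK : Fintype.card (AdjoinRoot f) = Fintype.card E := by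
    rw [Module.card_eq_pow_finrank (K := F) (V := AdjoinRoot f),
      Module.card_eq_pow_finrank (K := F) (V := E), (AdjoinRoot.powerBasis hf0).finrank,
      AdjoinRoot.powerBasis_dim, hdeg]
  have hroot : minpoly F (AdjoinRoot.root f) = f := by
    refine (minpoly.eq_of_irreducible_of_monic hirr ?_ hmon).symm
    rw [aeval_def, AdjoinRoot.algebraMap_eq, AdjoinRoot.eval₂_root]
  have hdvd : f ∣ X ^ Fintype.card E - X := by
    rw [← hroot]
    apply minpoly.dvd
    rw [map_sub, map_pow, aeval_X, ← hcardK, FiniteField.pow_card, sub_self]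
  have hΦroots : (X ^ Fintype.card E - X : E[X]).roots = Finset.univ.val :=
    FiniteField.roots_X_pow_card_sub_X E
  have hΦne : (X ^ Fintype.card E - X : E[X]) ≠ 0 :=
    FiniteField.X_pow_card_sub_X_ne_zero E Fintype.one_lt_card
  have hfE : f.map (algebraMap F E) ∣ (X ^ Fintype.card E - X : E[X]) := by
    have := Polynomial.map_dvd (algebraMap F E) hdvd
    simpa [Polynomial.map_sub, Polynomial.map_pow, Polynomial.map_X] using this
  have hfEne : f.map (algebraMap F E) ≠ 0 :=
    (Polynomial.map_ne_zero_iff (algebraMap F E).injective).mpr hf0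
  have hle : (f.map (algebraMap F E)).roots ≤ (X ^ Fintype.card E - X : E[X]).roots :=
    roots.le_of_dvd hΦne hfE
  have hnodup : (f.map (algebraMap F E)).roots.Nodup :=
    Multiset.nodup_of_le hle (by rw [hΦroots]; exact Finset.univ.nodup)
  have hΦsplits : (X ^ Fintype.card E - X : E[X]).Splits := by
    rw [splits_iff_card_roots, hΦroots,
      FiniteField.X_pow_card_sub_X_natDegree_eq E Fintype.one_lt_card]
    simp [Finset.card_univ]
  have hsplits : (f.map (algebraMap F E)).Splits :=
    Splits.of_dvd hΦsplits hΦne hfE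
  have hcardroots : Multiset.card (f.map (algebraMap F E)).roots = f.natDegree := by
    rw [splits_iff_card_roots.mp hsplits, natDegree_map]
  have hset : (Finset.univ.filter fun w : E => minpoly F w = f)
      = (f.map (algebraMap F E)).roots.toFinset := by
    ext w
    simp only [Finset.mem_filter, Finset.mem_univ, true_and, Multiset.mem_toFinset,
      mem_roots hfEne, IsRoot, eval_map, ← aeval_def]
    constructor
    · rintro rfl; exact minpoly.aeval F w
    · intro h; exact (minpoly.eq_of_irreducible_of_monic hirr h hmon).symm
  rw [hset, Multiset.toFinset_card_of_nodup hnodup, hcardroots]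

end KloostermanAux

/-- Let `p ∈ {2,3}`, `q = p^r`, `c ∈ 𝔽_q`, and `m ≥ 2`.  Then `m` times the number of monic
irreducible polynomials `x^m + a_{m-1}x^{m-1} + ⋯ + a_0 ∈ 𝔽_q[x]` with `a_{m-1} = c` and
`a_1 = 0` equals
`#{z ∈ 𝔽_{q^m} : z has degree m over 𝔽_q, Tr_{𝔽_{q^m}/𝔽_q}(z) = 0, Tr_{𝔽_{q^m}/𝔽_q}(z⁻¹) = c}`. -/
theorem irreducible_count_eq_G_kloosterman
    (p r m : ℕ) (hp : p = 2 ∨ p = 3) (hr : 0 < r) (hm : 2 ≤ m)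
    (F E : Type) [Field F] [Fintype F] [Field E] [Fintype E] [Algebra F E]
    (hF : Fintype.card F = p ^ r) (hE : Fintype.card E = (p ^ r) ^ m)
    (c : F) :
    m * Nat.card {f : Polynomial F // f.Monic ∧ Irreducible f ∧ f.natDegree = m ∧
        f.coeff (m - 1) = c ∧ f.coeff 1 = 0} =
      Nat.card {z : E // (minpoly F z).natDegree = m ∧ Algebra.trace F E z = 0 ∧
        Algebra.trace F E z⁻¹ = c} := by
  classical
  open Polynomial in
  have hp2 : 2 ≤ p := by rcases hp with h | h <;> omega
  have hq2 : 2 ≤ p ^ r := le_trans hp2 (Nat.le_self_pow hr.ne' p)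
  have hfr : Module.finrank F E = m := by
    have h1 : Fintype.card E = Fintype.card F ^ Module.finrank F E :=
      Module.card_eq_pow_finrank (K := F) (V := E)
    rw [hE, hF] at h1
    exact (Nat.pow_right_injective hq2 h1).symm
  set A : Finset E := Finset.univ.filter (fun w : E => (minpoly F w).natDegree = m ∧
      (minpoly F w).coeff (m - 1) = c ∧ (minpoly F w).coeff 1 = 0) with hA
  set B : Finset (Polynomial F) := A.image (minpoly F) with hB
  have hQB : ∀ f : Polynomial F, (f.Monic ∧ Irreducible f ∧ f.natDegree = m ∧
      f.coeff (m - 1) = c ∧ f.coeff 1 = 0) ↔ f ∈ B := by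
    intro f
    constructor
    · rintro ⟨h1, h2, h3, h4, h5⟩
      have hcard := aux_card_roots (F := F) (E := E) f h1 h2 (by rw [h3, hfr])
      have hpos : 0 < (Finset.univ.filter fun w : E => minpoly F w = f).card := by
        rw [hcard]; omega
      obtain ⟨w, hw⟩ := Finset.card_pos.mp hpos
      rw [Finset.mem_filter] at hw
      refine Finset.mem_image.mpr ⟨w, ?_, hw.2⟩
      rw [hA, Finset.mem_filter]
      exact ⟨Finset.mem_univ w, by rw [hw.2]; exact ⟨h3, h4, h5⟩⟩
    · intro hf
      obtain ⟨w, hwA, rfl⟩ := Finset.mem_image.mp hf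
      rw [hA, Finset.mem_filter] at hwA
      have hint : IsIntegral F w := .of_finite F w
      exact ⟨minpoly.monic hint, minpoly.irreducible hint, hwA.2⟩
  have hL : Nat.card {f : Polynomial F // f.Monic ∧ Irreducible f ∧ f.natDegree = m ∧
      f.coeff (m - 1) = c ∧ f.coeff 1 = 0} = B.card := by
    rw [Nat.card_congr (Equiv.subtypeEquivRight hQB), Nat.card_eq_fintype_card,
      Fintype.card_coe]
  have hfib : ∀ f ∈ B, (A.filter (fun w => minpoly F w = f)).card = m := by
    intro f hf
    obtain ⟨h1, h2, h3, h4, h5⟩ := (hQB f).mpr hf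
    have hAf : A.filter (fun w => minpoly F w = f)
        = Finset.univ.filter (fun w : E => minpoly F w = f) := by
      ext w
      simp only [Finset.mem_filter, Finset.mem_univ, true_and, hA]
      constructor
      · rintro ⟨_, h⟩; exact h
      · rintro h
        exact ⟨by rw [h]; exact ⟨h3, h4, h5⟩, h⟩
    rw [hAf, aux_card_roots (F := F) (E := E) f h1 h2 (by rw [h3, hfr]), h3]
  have hAB : A.card = B.card * m := by
    rw [Finset.card_eq_sum_card_fiberwise
      (fun w hw => Finset.mem_image_of_mem (minpoly F) hw)]
    rw [Finset.sum_congr rfl hfib, Finset.sum_const, smul_eq_mul]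
  -- the involution z ↦ -z⁻¹
  have hinvol : Function.Involutive (fun z : E => -z⁻¹) := by
    intro z
    simp [inv_neg, inv_inv]
  have hiff : ∀ z : E, ((minpoly F z).natDegree = m ∧ Algebra.trace F E z = 0 ∧
      Algebra.trace F E z⁻¹ = c) ↔ (-z⁻¹ ∈ A) := by
    intro z
    by_cases hz : z = 0
    · subst hz
      simp only [inv_zero, neg_zero, hA, Finset.mem_filter, Finset.mem_univ, true_and,
        minpoly.zero, natDegree_X]
      constructor
      · rintro ⟨h1, -⟩; omega
      · rintro ⟨h1, -⟩; omega
    · have hw : (-z⁻¹ : E) ≠ 0 := by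
        simp [hz]
      have hdegeq : (minpoly F (-z⁻¹ : E)).natDegree = (minpoly F z).natDegree :=
        aux_deg_invneg z hz
      rw [hA, Finset.mem_filter]
      by_cases hdm : (minpoly F z).natDegree = m
      · have hfrz : (minpoly F (-z⁻¹ : E)).natDegree = Module.finrank F E := by
          rw [hdegeq, hdm, hfr]
        have hmpos : 0 < (minpoly F (-z⁻¹ : E)).natDegree := by omega
        -- trace of w
        have htr1 : Algebra.trace F E (-z⁻¹) = -((minpoly F (-z⁻¹ : E)).coeff (m - 1)) := by
          rw [aux_trace_eq _ hfrz, nextCoeff_of_natDegree_pos hmpos, hdegeq, hdm]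
        have htr1' : (minpoly F (-z⁻¹ : E)).coeff (m - 1) = Algebra.trace F E z⁻¹ := by
          have : Algebra.trace F E (-z⁻¹) = -(Algebra.trace F E z⁻¹) := map_neg _ _
          rw [this] at htr1
          exact (neg_injective htr1.symm)
        -- trace of w⁻¹
        have hwinv : (-z⁻¹ : E)⁻¹ = -z := by rw [inv_neg, inv_inv]
        set k0 : F := (minpoly F (-z⁻¹ : E)).coeff 0 with hk0
        have hk0ne : k0 ≠ 0 := minpoly.coeff_zero_ne_zero (.of_finite F _) hw
        have hdeginv : (minpoly F ((-z⁻¹ : E))⁻¹).natDegree = m := by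
          rw [aux_deg_inv, hdegeq, hdm]
        have htr2 : Algebra.trace F E ((-z⁻¹ : E)⁻¹)
            = -(k0⁻¹ * (minpoly F (-z⁻¹ : E)).coeff 1) := by
          rw [aux_trace_eq _ (by rw [hdeginv, hfr]),
            nextCoeff_of_natDegree_pos (by omega), hdeginv,
            aux_minpoly_inv _ hw, coeff_C_mul, coeff_reverse,
            revAt_le (by omega : m - 1 ≤ (minpoly F (-z⁻¹ : E)).natDegree), hdegeq, hdm]
          congr 3
          omega
        have htr2' : k0⁻¹ * (minpoly F (-z⁻¹ : E)).coeff 1 = Algebra.trace F E z := by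
          rw [hwinv, map_neg] at htr2
          exact (neg_injective htr2.symm)
        constructor
        · rintro ⟨-, h2, h3⟩
          refine ⟨Finset.mem_univ _, by rw [hdegeq, hdm], by rw [htr1', h3], ?_⟩
          have : k0⁻¹ * (minpoly F (-z⁻¹ : E)).coeff 1 = 0 := by rw [htr2', h2]
          rcases mul_eq_zero.mp this with h | h
          · exact absurd h (inv_ne_zero hk0ne)
          · exact h
        · rintro ⟨-, hd, hc1, hc2⟩
          refine ⟨hdm, ?_, by rw [← htr1', hc1]⟩
          rw [← htr2', hc2, mul_zero]
      · constructor
        · rintro ⟨h1, -⟩; exact absurd h1 hdm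
        · rintro ⟨-, hd, -⟩
          rw [hdegeq] at hd
          exact absurd hd hdm
  have hR : Nat.card {z : E // (minpoly F z).natDegree = m ∧ Algebra.trace F E z = 0 ∧
      Algebra.trace F E z⁻¹ = c} = A.card := by
    have e := Equiv.subtypeEquiv (p := fun z : E => (minpoly F z).natDegree = m ∧
        Algebra.trace F E z = 0 ∧ Algebra.trace F E z⁻¹ = c)
      (q := fun w : E => w ∈ A) (hinvol.toPerm _) (by
        intro z
        simpa [Function.Involutive.coe_toPerm] using hiff z)
    rw [Nat.card_congr e, Nat.card_eq_fintype_card, Fintype.card_coe]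
  rw [hL, hR, hAB, Nat.mul_comm]
end
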